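/- arXiv:2509.23245 — 5 statements merged into one kernel-verified Lean document; each statement's English description precedes it below -/
import Mathlib

section
/- Let q be a prime power, let a ∈ F_{q^n} be q^n/q-normal, and let d be a divisor of n. Then the relative trace Tr_{q^n/q^d}(a) = Σ_{i=0}^{n/d−1} a^{q^{di}} is q^d/q-normal as an element of F_{q^d}; in particular, Tr_{q^n/q^d}(a) ≠ 0. -/
open scoped BigOperators

section Aux
variable {E : Type*} [Field E]

lemma aux_pow_add (x : E) (q j k : ℕ) : x ^ q ^ (j + k) = (x ^ q ^ j) ^ q ^ k := by
  rw [pow_add, pow_mul]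

lemma aux_fix_pow {c : E} {q : ℕ} (hc : c ^ q = c) : ∀ k, c ^ q ^ k = c := by
  intro k
  induction k with
  | zero => simp
  | succ k ih => rw [pow_succ, pow_mul, ih, hc]

lemma aux_periodic {q n : ℕ} (x : E) (hx : x ^ q ^ n = x) (k : ℕ) :
    x ^ q ^ k = x ^ q ^ (k % n) := by
  conv_lhs => rw [← Nat.mod_add_div k n]
  generalize k / n = j
  induction j with
  | zero => simp
  | succ j ih =>
    rw [Nat.mul_succ, ← Nat.add_assoc, aux_pow_add, ← aux_pow_add, add_comm, aux_pow_add, hx, ih]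

lemma aux_sum_pow {p : ℕ} [Fact p.Prime] [CharP E p] {ι : Type*} (u : Finset ι)
    (f : ι → E) (s k : ℕ) :
    (∑ i ∈ u, f i) ^ (p ^ s) ^ k = ∑ i ∈ u, f i ^ (p ^ s) ^ k := by
  have h : (p ^ s) ^ k = p ^ (s * k) := by rw [pow_mul]
  rw [h]
  simpa only [iterateFrobenius_def] using map_sum (iterateFrobenius E p (s * k)) f u

end Aux

/-- In an ambient finite field `E` (of order `q^N` for some multiple `N` of `m`), the element
`a` — assumed to lie in the subfield `F_{q^m} = {x | x ^ q ^ m = x}` — is `q^m/q^d`-normal: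
the conjugates `a ^ q ^ (d*i)`, `i = 0, …, m/d − 1`, form a basis of `F_{q^m}` as a vector
space over `F_{q^d} = {x | x ^ q ^ d = x}`, encoded by the unique representation of every
element of `F_{q^m}` as a linear combination of the conjugates with coefficients in `F_{q^d}`. -/
def IsNormalElemIn (q d m : ℕ) {E : Type*} [Field E] (a : E) : Prop :=
  ∀ x : E, x ^ q ^ m = x →
    ∃! c : Fin (m / d) → E,
      (∀ i, c i ^ q ^ d = c i) ∧ x = ∑ i, c i * a ^ q ^ (d * (i : ℕ))


/-- Lemma 4.4: Let `q` be a prime power, `a ∈ F_{q^n}` be `q^n/q`-normal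
and `d ∣ n`.  Then `Tr_{q^n/q^d}(a) = ∑_{i<n/d} a^{q^{d i}}` lies in `F_{q^d}` and is
`q^d/q`-normal; in particular it is nonzero. -/
theorem stmt7 (q n d : ℕ) (hq : IsPrimePow q) (hn : 0 < n) (hd : d ∣ n)
    (E : Type) [Field E] [Fintype E] (hE : Fintype.card E = q ^ n)
    (a : E) (ha : IsNormalElemIn q 1 n a) :
    (∑ i : Fin (n / d), a ^ q ^ (d * (i : ℕ))) ^ q ^ d
        = ∑ i : Fin (n / d), a ^ q ^ (d * (i : ℕ)) ∧
      IsNormalElemIn q 1 d (∑ i : Fin (n / d), a ^ q ^ (d * (i : ℕ))) ∧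
      ∑ i : Fin (n / d), a ^ q ^ (d * (i : ℕ)) ≠ 0 := by
  obtain ⟨m, rfl⟩ := hd
  have hd0 : 0 < d := by
    rcases Nat.eq_zero_or_pos d with h | h
    · subst h; simp at hn
    · exact h
  have hm0 : 0 < m := by
    rcases Nat.eq_zero_or_pos m with h | h
    · subst h; simp at hn
    · exact h
  haveI : NeZero (d * m) := ⟨hn.ne'⟩
  haveI : NeZero d := ⟨hd0.ne'⟩
  haveI : NeZero m := ⟨hm0.ne'⟩
  rw [show d * m / d = m from Nat.mul_div_cancel_left m hd0]
  -- characteristic setup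
  obtain ⟨p, s, hpp, hs, rfl⟩ := hq
  haveI hfp : Fact p.Prime := ⟨hpp.nat_prime⟩
  haveI hcharE : CharP E p := by
    rw [← ringChar.eq_iff]
    have h1 : ((Fintype.card E : ℕ) : E) = 0 := FiniteField.cast_card_eq_zero E
    rw [hE] at h1
    have h2 : ringChar E ∣ (p ^ s) ^ (d * m) :=
      (CharP.cast_eq_zero_iff E (ringChar E) _).mp h1
    have hrc : (ringChar E).Prime := CharP.char_is_prime E (ringChar E)
    rw [← pow_mul] at h2
    have h3 : ringChar E ∣ p := hrc.dvd_of_dvd_pow h2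
    exact (Nat.prime_dvd_prime_iff_eq hrc hfp.out).mp h3
  have hq0 : (p ^ s) ≠ 0 := (pow_pos hpp.nat_prime.pos s).ne'
  have hall : ∀ x : E, x ^ (p ^ s) ^ (d * m) = x := fun x => by
    rw [← hE]; exact FiniteField.pow_card x
  simp only [IsNormalElemIn, pow_one, one_mul] at ha
  rw [show d * m / 1 = d * m from Nat.div_one _] at ha
  set t := ∑ i : Fin m, a ^ (p ^ s) ^ (d * (i : ℕ)) with htdef
  have hsum : ∀ {ι : Type} (u : Finset ι) (f : ι → E) (j : ℕ),
      (∑ i ∈ u, f i) ^ (p ^ s) ^ j = ∑ i ∈ u, f i ^ (p ^ s) ^ j :=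
    fun u f j => aux_sum_pow u f s j
  have htconj : ∀ j : ℕ, t ^ (p ^ s) ^ j = ∑ k : Fin m, a ^ (p ^ s) ^ (d * (k:ℕ) + j) := by
    intro j
    rw [htdef, hsum]
    exact Finset.sum_congr rfl fun k _ => (aux_pow_add a (p ^ s) (d * k) j).symm
  have hkey : ∀ k1 k2 : ℕ, k1 % (d * m) = k2 % (d * m) →
      a ^ (p ^ s) ^ k1 = a ^ (p ^ s) ^ k2 := fun k1 k2 h => by
    rw [aux_periodic a (hall a) k1, aux_periodic a (hall a) k2, h]
  -- the index bijection, and splitting sums over Fin (d*m)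
  have hlt : ∀ (j : Fin d) (k : Fin m), d * (k:ℕ) + (j:ℕ) < d * m := by
    intro j k
    calc d * (k:ℕ) + (j:ℕ) < d * (k:ℕ) + d := by have := j.isLt; omega
      _ = d * ((k:ℕ) + 1) := by ring
      _ ≤ d * m := Nat.mul_le_mul_left d k.isLt
  have hsum_split : ∀ f : Fin (d * m) → E,
      ∑ i, f i = ∑ j : Fin d, ∑ k : Fin m, f ⟨d * (k:ℕ) + (j:ℕ), hlt j k⟩ := by
    intro f
    have hbij : Function.Bijective
        (fun jk : Fin d × Fin m => (⟨d * (jk.2:ℕ) + (jk.1:ℕ), hlt jk.1 jk.2⟩ : Fin (d * m))) := by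
      rw [Fintype.bijective_iff_injective_and_card]
      constructor
      · rintro ⟨j, k⟩ ⟨j', k'⟩ hjk
        have hv : d * (k:ℕ) + (j:ℕ) = d * (k':ℕ) + (j':ℕ) := congrArg Fin.val hjk
        have hj : (j:ℕ) = (j':ℕ) := by
          have h := congrArg (· % d) hv
          simpa [Nat.mul_add_mod, Nat.mod_eq_of_lt j.isLt, Nat.mod_eq_of_lt j'.isLt] using h
        have hk : (k:ℕ) = (k':ℕ) := by
          have h : d * (k:ℕ) = d * (k':ℕ) := by omega
          exact Nat.eq_of_mul_eq_mul_left hd0 h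
        exact Prod.ext (Fin.ext hj) (Fin.ext hk)
      · simp
    calc ∑ i, f i
        = ∑ jk : Fin d × Fin m, f ⟨d * (jk.2:ℕ) + (jk.1:ℕ), hlt jk.1 jk.2⟩ :=
          (Fintype.sum_bijective _ hbij _ f (fun jk => rfl)).symm
      _ = ∑ j : Fin d, ∑ k : Fin m, f ⟨d * (k:ℕ) + (j:ℕ), hlt j k⟩ := by
          rw [Fintype.sum_prod_type]
  -- expansion lemma
  have hexpand : ∀ c : Fin d → E,
      ∑ i : Fin (d * m), c ⟨(i:ℕ) % d, Nat.mod_lt _ hd0⟩ * a ^ (p ^ s) ^ (i:ℕ)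
        = ∑ j : Fin d, c j * t ^ (p ^ s) ^ (j:ℕ) := by
    intro c
    rw [hsum_split (fun i : Fin (d * m) => c ⟨(i:ℕ) % d, Nat.mod_lt _ hd0⟩ * a ^ (p ^ s) ^ (i:ℕ))]
    refine Finset.sum_congr rfl fun j _ => ?_
    rw [htconj (j:ℕ), Finset.mul_sum]
    refine Finset.sum_congr rfl fun k _ => ?_
    congr 2
    exact Fin.ext (by simp [Nat.mul_add_mod, Nat.mod_eq_of_lt j.isLt])
  -- part 1 : t ^ q^d = t
  have part1 : t ^ (p ^ s) ^ d = t := by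
    rw [htconj d, htdef]
    refine Fintype.sum_equiv (Equiv.addRight (1 : Fin m)) _ _ fun k => ?_
    simp only [Equiv.coe_addRight]
    apply hkey
    have hv : ((k + 1 : Fin m) : ℕ) = ((k:ℕ) + 1) % m := by
      rw [Fin.val_add, Fin.val_one']
      exact Nat.add_mod_mod _ _ _
    rw [hv]
    have h1 : d * (k:ℕ) + d = d * ((k:ℕ) + 1) := by ring
    rw [h1, Nat.mul_mod_mul_left, Nat.mul_mod_mul_left, Nat.mod_mod_of_dvd _ dvd_rfl]
  -- part 2: normality
  have part2 : ∀ x : E, x ^ (p ^ s) ^ d = x →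
      ∃! c : Fin d → E, (∀ j, c j ^ (p ^ s) = c j) ∧
        x = ∑ j, c j * t ^ (p ^ s) ^ (j:ℕ) := by
    intro x hx
    obtain ⟨b, ⟨hbF, hbx⟩, hbu⟩ := ha x (hall x)
    set δ : Fin (d * m) := Fin.ofNat (d * m) d with hδ
    have hδval : (δ : ℕ) = d % (d * m) := rfl
    have hb' : (fun i => b (i - δ)) = b := by
      apply hbu
      refine ⟨fun i => hbF _, ?_⟩
      conv_lhs => rw [← hx, hbx]
      rw [hsum]
      calc ∑ i : Fin (d * m), (b i * a ^ (p ^ s) ^ (i:ℕ)) ^ (p ^ s) ^ d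
          = ∑ i : Fin (d * m), b i * a ^ (p ^ s) ^ ((i:ℕ) + d) := by
            refine Finset.sum_congr rfl fun i _ => ?_
            rw [mul_pow, aux_fix_pow (hbF i), ← aux_pow_add]
        _ = ∑ i : Fin (d * m), b (i - δ) * a ^ (p ^ s) ^ (i:ℕ) := by
            refine Fintype.sum_equiv (Equiv.addRight δ) _ _ fun i => ?_
            simp only [Equiv.coe_addRight]
            rw [add_sub_cancel_right]
            congr 1
            apply hkey
            rw [Fin.val_add, hδval, Nat.mod_mod_of_dvd _ dvd_rfl, Nat.add_mod_mod]
    have hshift : ∀ i : Fin (d * m), b i = b (i + δ) := by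
      intro i
      conv_lhs => rw [← add_sub_cancel_right i δ]
      exact congrFun hb' (i + δ)
    have hjlt : ∀ j : Fin d, (j : ℕ) < d * m :=
      fun j => lt_of_lt_of_le j.isLt (Nat.le_mul_of_pos_right d hm0)
    have hbmod : ∀ (k : ℕ), ∀ hk : k < m, ∀ (j : ℕ), ∀ hj : j < d,
        ∀ (h1 : d * k + j < d * m) (h2 : j < d * m),
        b ⟨d * k + j, h1⟩ = b ⟨j, h2⟩ := by
      intro k
      induction k with
      | zero => intro _ j hj h1 h2; congr 1; exact Fin.ext (by simp)
      | succ k ih =>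
        intro hk j hj h1 h2
        have hkm : k < m := by omega
        have h1' : d * k + j < d * m := by
          calc d * k + j < d * k + d := by omega
            _ = d * (k + 1) := by ring
            _ ≤ d * m := Nat.mul_le_mul_left d hk.le
        have hdm : d < d * m := by
          have hm2 : 1 < m := by omega
          nlinarith
        have heq : (⟨d * k + j, h1'⟩ : Fin (d * m)) + δ = ⟨d * (k + 1) + j, h1⟩ := by
          apply Fin.ext
          rw [Fin.val_add, hδval, Nat.mod_eq_of_lt hdm]
          have : d * k + j + d = d * (k + 1) + j := by ring
          rw [this, Nat.mod_eq_of_lt h1]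
        rw [← heq, ← hshift]
        exact ih hkm j hj h1' h2
    refine ⟨fun j => b ⟨(j:ℕ), hjlt j⟩, ⟨fun j => hbF _, ?_⟩, ?_⟩
    · conv_lhs => rw [hbx]
      rw [hsum_split (fun i : Fin (d * m) => b i * a ^ (p ^ s) ^ (i:ℕ))]
      refine Finset.sum_congr rfl fun j _ => ?_
      rw [htconj (j:ℕ), Finset.mul_sum]
      refine Finset.sum_congr rfl fun k _ => ?_
      congr 1
      exact hbmod k k.isLt j j.isLt _ _
    · rintro c' ⟨hc'F, hc'x⟩
      funext j
      have hb'' : (fun i : Fin (d * m) => c' ⟨(i:ℕ) % d, Nat.mod_lt _ hd0⟩) = b := by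
        apply hbu
        refine ⟨fun i => hc'F _, ?_⟩
        rw [hexpand c']
        exact hc'x
      have h := congrFun hb'' ⟨(j:ℕ), hjlt j⟩
      simp only at h
      rw [show (⟨(j:ℕ) % d, Nat.mod_lt _ hd0⟩ : Fin d) = j from
        Fin.ext (Nat.mod_eq_of_lt j.isLt)] at h
      exact h
  refine ⟨part1, ?_, ?_⟩
  · unfold IsNormalElemIn
    rw [show d / 1 = d from Nat.div_one _]
    simp only [pow_one, one_mul]
    exact part2
  · intro ht0
    obtain ⟨c0, _, hc0u⟩ := part2 0 (by rw [zero_pow (pow_ne_zero d hq0)])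
    have h1 : (fun _ : Fin d => (0:E)) = c0 := hc0u _ ⟨fun j => zero_pow hq0, by simp⟩
    have h2 : (fun j : Fin d => if j = 0 then (1:E) else 0) = c0 := by
      apply hc0u
      constructor
      · intro j
        split_ifs with h
        · exact one_pow _
        · exact zero_pow hq0
      · simp [ite_mul, ht0]
    have h3 := congrFun (h1.trans h2.symm) 0
    simp at h3
end

section
/- Let q be a prime power and let n₁, n₂ be relatively prime positive integers. If a ∈ F_{q^{n₁}} is q^{n₁}/q-normal, then, regarded as an element of F_{q^{n₁n₂}}, a is q^{n₁n₂}/q^{n₂}-normal, i.e., the conjugates a, a^{q^{n₂}}, a^{q^{2n₂}}, …, a^{q^{(n₁−1)n₂}} form a basis of F_{q^{n₁n₂}} as an F_{q^{n₂}}-vector space. -/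
open scoped BigOperators

open Polynomial Finset in
lemma aux_card_fixed {E : Type*} [Field E] [Fintype E] [DecidableEq E] (N : ℕ) (hN : 1 < N)
    (hch : ((N : ℕ) : E) = 0) (hdvd : N - 1 ∣ Fintype.card E - 1) :
    (Finset.univ.filter (fun x : E => x ^ N = x)).card = N := by
  have hP0 : (X ^ N - X : E[X]) ≠ 0 := FiniteField.X_pow_card_sub_X_ne_zero E hN
  have hQ0 : (X ^ Fintype.card E - X : E[X]) ≠ 0 :=
    FiniteField.X_pow_card_sub_X_ne_zero E Fintype.one_lt_card
  obtain ⟨m, hm⟩ := hdvd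
  have hfactor : ∀ M : ℕ, 0 < M → (X ^ M - X : E[X]) = X * (X ^ (M - 1) - 1) := by
    intro M hM
    rw [mul_sub, mul_one, ← pow_succ', Nat.sub_add_cancel hM]
  have hdvdP : (X ^ N - X : E[X]) ∣ X ^ Fintype.card E - X := by
    rw [hfactor N (by omega), hfactor (Fintype.card E) Fintype.card_pos]
    refine mul_dvd_mul_left _ ?_
    have h := sub_dvd_pow_sub_pow ((X : E[X]) ^ (N - 1)) 1 m
    rwa [one_pow, ← pow_mul, ← hm] at h
  have hQsplits : Splits (X ^ Fintype.card E - X : E[X]) := by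
    rw [splits_iff_card_roots, FiniteField.roots_X_pow_card_sub_X,
      FiniteField.X_pow_card_sub_X_natDegree_eq E Fintype.one_lt_card]
    simp
  have hPsplits : Splits (X ^ N - X : E[X]) :=
    hQsplits.of_dvd hQ0 hdvdP
  have hcard : Multiset.card (X ^ N - X : E[X]).roots = N := by
    rw [splits_iff_card_roots.mp hPsplits, FiniteField.X_pow_card_sub_X_natDegree_eq E hN]
  have hsep : ((X ^ N - X : E[X])).Separable := by
    rw [separable_def]
    rw [derivative_sub, derivative_X, derivative_X_pow, hch, C_0, zero_mul, zero_sub]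
    exact isCoprime_one_right.neg_right (R := E[X])
  have hnodup : (X ^ N - X : E[X]).roots.Nodup := nodup_roots hsep
  have hset : Finset.univ.filter (fun x : E => x ^ N = x) = (X ^ N - X : E[X]).roots.toFinset := by
    ext x
    simp only [mem_filter, mem_univ, true_and, Multiset.mem_toFinset, mem_roots hP0,
      IsRoot.def, eval_sub, eval_pow, eval_X, sub_eq_zero]
  rw [hset, Multiset.toFinset_card_of_nodup hnodup, hcard]

lemma aux_pow_mod {E : Type*} [Field E] (a : E) (q n : ℕ)
    (h : a ^ q ^ n = a) (m : ℕ) : a ^ q ^ m = a ^ q ^ (m % n) := by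
  have key : ∀ t : ℕ, a ^ q ^ (n * t) = a := by
    intro t
    induction t with
    | zero => simp
    | succ t ih =>
      have : q ^ (n * (t + 1)) = q ^ (n * t) * q ^ n := by rw [← pow_add]; ring_nf
      rw [this, pow_mul, ih, h]
  conv_lhs => rw [(Nat.div_add_mod m n).symm, pow_add, pow_mul, key]

/-- Lemma 4.2: Let `q` be a prime power and `n₁, n₂` relatively prime.
If `a ∈ F_{q^{n₁}}` is `q^{n₁}/q`-normal, then, regarded as an element of `F_{q^{n₁n₂}}`,
`a` is `q^{n₁n₂}/q^{n₂}`-normal: the conjugates `a, a^{q^{n₂}}, …, a^{q^{(n₁−1)n₂}}` form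
a basis of `F_{q^{n₁n₂}}` over `F_{q^{n₂}}`. -/
theorem stmt8 (q n₁ n₂ : ℕ) (hq : IsPrimePow q) (h₁ : 0 < n₁) (h₂ : 0 < n₂)
    (hcop : Nat.Coprime n₁ n₂)
    (E : Type) [Field E] [Fintype E] (hE : Fintype.card E = q ^ (n₁ * n₂))
    (a : E) (haF : a ^ q ^ n₁ = a) (ha : IsNormalElemIn q 1 n₁ a) :
    IsNormalElemIn q n₂ (n₁ * n₂) a := by
  classical
  have hq2 : 2 ≤ q := hq.two_le
  obtain ⟨p, k, hpp, hk, hpk⟩ := hq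
  have hp : p.Prime := hpp.nat_prime
  haveI : Fact p.Prime := ⟨hp⟩
  -- characteristic
  obtain ⟨n, hr, hcard⟩ := FiniteField.card E (ringChar E)
  haveI : CharP E p := by
    have h1 : p ∣ ringChar E ^ (n : ℕ) := by
      rw [← hcard, hE, ← hpk]
      exact dvd_pow (dvd_pow_self p hk.ne') (by positivity)
    have h2 : p = ringChar E :=
      (Nat.prime_dvd_prime_iff_eq hp (CharP.char_is_prime E (ringChar E))).mp
        (hp.dvd_of_dvd_pow h1)
    exact h2 ▸ ringChar.charP E
  have hq0 : ∀ d : ℕ, 0 < d → ((q ^ d : ℕ) : E) = 0 := by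
    intro d hd
    rw [← hpk, ← pow_mul, Nat.cast_pow, CharP.cast_eq_zero E p]
    exact zero_pow (by positivity)
  have hfrob : ∀ (d : ℕ) (x y : E), (x + y) ^ q ^ d = x ^ q ^ d + y ^ q ^ d := by
    intro d x y
    rw [← hpk, ← pow_mul]
    exact add_pow_char_pow x y p (k * d)
  -- the subfields
  have hqd0 : ∀ d : ℕ, q ^ d ≠ 0 := fun d => (pow_pos (by omega) d).ne'
  let F : ℕ → Subfield E := fun d =>
    { carrier := {x | x ^ q ^ d = x}
      zero_mem' := by simp [zero_pow (hqd0 _)]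
      one_mem' := one_pow _
      add_mem' := by
        intro x y hx hy
        simp only [Set.mem_setOf_eq] at *
        rw [hfrob, hx, hy]
      mul_mem' := by
        intro x y hx hy
        simp only [Set.mem_setOf_eq] at *
        rw [mul_pow, hx, hy]
      neg_mem' := by
        intro x hx
        simp only [Set.mem_setOf_eq] at *
        have h := hfrob d x (-x)
        rw [add_neg_cancel, zero_pow (hqd0 _), hx] at h
        linear_combination -h
      inv_mem' := by
        intro x hx
        simp only [Set.mem_setOf_eq] at *
        rw [inv_pow, hx] }
  have hmemF : ∀ (d : ℕ) (x : E), x ∈ F d ↔ x ^ q ^ d = x := fun _ _ => Iff.rfl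
  -- cardinalities of the subfields
  have hcardF : ∀ d : ℕ, 0 < d → d ∣ n₁ * n₂ → Fintype.card (F d) = q ^ d := by
    intro d hd hdvd
    have e1 : Fintype.card (F d) = (Finset.univ.filter (fun x : E => x ^ q ^ d = x)).card := by
      rw [← Fintype.card_subtype]
      exact Fintype.card_congr (Equiv.subtypeEquivRight (fun x => hmemF d x))
    rw [e1]
    refine aux_card_fixed (q ^ d) (Nat.one_lt_pow hd.ne' hq2) (hq0 d hd) ?_
    obtain ⟨m, hm⟩ := hdvd
    rw [hE, hm, pow_mul]
    simpa using Nat.sub_dvd_pow_sub_pow (q ^ d) 1 m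
  -- the degree of E over F n₂ is n₁
  have hrankE : Module.finrank (F n₂) E = n₁ := by
    have h := Module.card_eq_pow_finrank (K := F n₂) (V := E)
    rw [hE, hcardF n₂ h₂ ⟨n₁, mul_comm n₁ n₂⟩, ← pow_mul] at h
    have h2 := Nat.pow_right_injective hq2 h
    exact (Nat.eq_of_mul_eq_mul_left h₂ (by rw [mul_comm n₂ n₁]; exact h2)).symm
  -- the conjugates
  set v : Fin n₁ → E := fun i => a ^ q ^ (n₂ * (i : ℕ)) with hv
  have hva : ∀ m : ℕ, a ^ q ^ m = a ^ q ^ (m % n₁) := aux_pow_mod a q n₁ haF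
  have hvmem : ∀ j : ℕ, ∃ i : Fin n₁, v i = a ^ q ^ (j % n₁) := by
    intro j
    rcases eq_or_lt_of_le (Nat.succ_le_of_lt h₁) with h1 | h1
    · refine ⟨⟨0, h₁⟩, ?_⟩
      simp only [hv]
      rw [hva (n₂ * 0)]
      congr 2
      rw [← h1]
      show n₂ * 0 % 1 = j % 1
      simp [Nat.mod_one]
    · obtain ⟨u, -, hu⟩ := Nat.exists_mul_mod_eq_one_of_coprime hcop.symm h1
      refine ⟨⟨(u * j) % n₁, Nat.mod_lt _ (by omega)⟩, ?_⟩
      simp only [hv]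
      rw [hva]
      congr 2
      have h2 : n₂ * ((u * j) % n₁) ≡ n₂ * (u * j) [MOD n₁] :=
        Nat.ModEq.mul_left n₂ (Nat.mod_modEq _ _)
      have h4 : (n₂ * u) * j ≡ 1 * j [MOD n₁] := by
        refine Nat.ModEq.mul_right j ?_
        show (n₂ * u) % n₁ = 1 % n₁
        rw [hu, Nat.mod_eq_of_lt h1]
      calc (n₂ * ((u * j) % n₁)) % n₁ = (n₂ * (u * j)) % n₁ := h2
        _ = ((n₂ * u) * j) % n₁ := by ring_nf
        _ = (1 * j) % n₁ := h4
        _ = j % n₁ := by rw [one_mul]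
  -- the span of the conjugates over F n₂
  set W : Submodule (F n₂) E := Submodule.span (F n₂) (Set.range v) with hW
  have hsmul_def : ∀ (c : F n₂) (x : E), c • x = (c : E) * x := fun c x => rfl
  have haW : ∀ j : ℕ, a ^ q ^ (j % n₁) ∈ W := by
    intro j
    obtain ⟨i, hi⟩ := hvmem j
    exact hi ▸ Submodule.subset_span ⟨i, rfl⟩
  have hF1W : ∀ x : E, x ^ q ^ n₁ = x → x ∈ W := by
    intro x hx
    obtain ⟨c, ⟨hc1, hc2⟩, -⟩ := ha x hx
    rw [hc2]
    refine Submodule.sum_mem _ (fun i _ => ?_)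
    have hciK : c i ∈ F n₂ := by
      rw [hmemF]
      have h5 := aux_pow_mod (c i) q 1 (by simpa using hc1 i) n₂
      rwa [Nat.mod_one, pow_zero, pow_one] at h5
    have h6 : c i * a ^ q ^ (1 * (i : ℕ)) =
        (⟨c i, hciK⟩ : F n₂) • (a ^ q ^ ((1 * (i : ℕ)) % n₁)) := by
      rw [hsmul_def, ← hva]
    rw [h6]
    exact Submodule.smul_mem _ _ (haW _)
  have hmulW : ∀ y : E, y ^ q ^ n₁ = y → ∀ w ∈ W, y * w ∈ W := by
    intro y hy w hw
    induction hw using Submodule.span_induction with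
    | mem z hz =>
      obtain ⟨i, rfl⟩ := hz
      apply hF1W
      have hvi : (v i) ^ q ^ n₁ = v i := by
        simp only [hv]
        rw [← pow_mul, ← pow_add, hva (n₂ * (i : ℕ) + n₁), Nat.add_mod_right, ← hva]
      rw [mul_pow, hy, hvi]
    | zero => simpa using Submodule.zero_mem W
    | add u z hu hz ihu ihz =>
      rw [mul_add]
      exact Submodule.add_mem _ ihu ihz
    | smul c u hu ihu =>
      rw [hsmul_def, ← mul_assoc, mul_comm y (c : E), mul_assoc, ← hsmul_def]
      exact Submodule.smul_mem _ _ ihu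
  -- W as an F n₁ submodule
  let W' : Submodule (F n₁) E :=
    { carrier := (W : Set E)
      add_mem' := fun hx hy => W.add_mem hx hy
      zero_mem' := W.zero_mem
      smul_mem' := fun c x hx => hmulW (c : E) c.2 x hx }
  haveI : Fintype W := Fintype.ofFinite _
  haveI : Fintype W' := Fintype.ofFinite _
  have hcW2 : Fintype.card W' = Fintype.card W :=
    Fintype.card_congr (Equiv.subtypeEquivRight (fun x => Iff.rfl))
  have e2 : Fintype.card W = Fintype.card (F n₂) ^ Module.finrank (F n₂) W := by
    set_option synthInstance.maxHeartbeats 400000 in exact Module.card_eq_pow_finrank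
  have e3 : Fintype.card W' = Fintype.card (F n₁) ^ Module.finrank (F n₁) W' := by
    set_option synthInstance.maxHeartbeats 400000 in exact Module.card_eq_pow_finrank
  set r₂ := Module.finrank (F n₂) W with hr₂
  set r₁ := Module.finrank (F n₁) W' with hr₁
  have hkey : n₂ * r₂ = n₁ * r₁ := by
    apply Nat.pow_right_injective hq2
    show q ^ (n₂ * r₂) = q ^ (n₁ * r₁)
    rw [pow_mul, pow_mul, ← hcardF n₂ h₂ ⟨n₁, mul_comm n₁ n₂⟩, ← hcardF n₁ h₁ ⟨n₂, rfl⟩,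
      ← e2, ← e3, hcW2]
  have hr₂pos : 0 < r₂ := by
    rcases Nat.eq_zero_or_pos r₂ with h0 | h0
    · exfalso
      have h1W : (1 : E) ∈ W := hF1W 1 (one_pow _)
      have h0W : (0 : E) ∈ W := W.zero_mem
      have : 1 < Fintype.card W := by
        rw [Fintype.one_lt_card_iff]
        exact ⟨⟨1, h1W⟩, ⟨0, h0W⟩, by simp [Subtype.ext_iff]⟩
      rw [e2, h0, pow_zero] at this
      omega
    · exact h0
  have hr₂le : r₂ ≤ n₁ := hrankE ▸ Submodule.finrank_le W
  have hr₂eq : r₂ = n₁ := by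
    have hdvd : n₁ ∣ r₂ := hcop.dvd_of_dvd_mul_left ⟨r₁, hkey⟩
    exact le_antisymm hr₂le (Nat.le_of_dvd hr₂pos hdvd)
  have hWtop : W = ⊤ := Submodule.eq_top_of_finrank_eq (by rw [← hr₂, hr₂eq, hrankE])
  -- the basis
  have hspan : ⊤ ≤ Submodule.span (F n₂) (Set.range v) := hWtop.symm.le
  let b : Module.Basis (Fin n₁) (F n₂) E :=
    basisOfTopLeSpanOfCardEqFinrank v hspan (by simp [hrankE])
  have hb : ∀ i, b i = v i := fun i => by
    rw [coe_basisOfTopLeSpanOfCardEqFinrank]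
  -- conclusion
  intro x hx
  have hdiv : n₁ * n₂ / n₂ = n₁ := by rw [Nat.mul_div_assoc n₁ dvd_rfl, Nat.div_self h₂, mul_one]
  rw [hdiv]
  refine ⟨fun i => (b.repr x i : E), ⟨fun i => (b.repr x i).2, ?_⟩, ?_⟩
  · conv_lhs => rw [← b.sum_repr x]
    refine Finset.sum_congr rfl (fun i _ => ?_)
    rw [hb, hsmul_def]
  · rintro c' ⟨hc'1, hc'2⟩
    have hx2 : x = ∑ j, (⟨c' j, (hmemF n₂ _).mpr (hc'1 j)⟩ : F n₂) • b j := by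
      rw [hc'2]
      exact Finset.sum_congr rfl (fun j _ => by rw [hb, hsmul_def])
    have hrx : ⇑(b.repr x) = fun j => (⟨c' j, (hmemF n₂ _).mpr (hc'1 j)⟩ : F n₂) := by
      rw [hx2, b.repr_sum_self]
    funext i
    rw [hrx]
end

section
/- Let q be a prime power and n = n₁n₂ where n₁ and n₂ are relatively prime. If a_i ∈ F_{q^{n_i}} is q^{n_i}/q-normal for i = 1, 2, then the product a₁a₂ is q^n/q-normal. -/
open Polynomial Finset


open scoped BigOperators

private lemma aux_pow_pow_fixed_mul {E : Type*} [Monoid E] {q m : ℕ} {x : E}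
    (hx : x ^ q ^ m = x) (t : ℕ) : x ^ q ^ (m * t) = x := by
  induction t with
  | zero => simp
  | succ t ih => rw [Nat.mul_succ, pow_add, pow_mul, ih, hx]

private lemma aux_pow_pow_mod {E : Type*} [Monoid E] {q m : ℕ} {x : E}
    (hx : x ^ q ^ m = x) (j : ℕ) : x ^ q ^ j = x ^ q ^ (j % m) := by
  conv_lhs => rw [← Nat.div_add_mod j m, pow_add, pow_mul,
    aux_pow_pow_fixed_mul hx (j / m)]

private lemma aux_pow_q_fixed {E : Type*} [Monoid E] {q : ℕ} {x : E}
    (hx : x ^ q = x) (j : ℕ) : x ^ q ^ j = x := by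
  have h1 : x ^ q ^ 1 = x := by simpa using hx
  simpa using aux_pow_pow_fixed_mul h1 j

/-- number of solutions of `x ^ q = x` in a field of with `q ^ n` elements -/
private lemma aux_cardK {q n : ℕ} (hq2 : 2 ≤ q) (hn : 0 < n) (E : Type*) [Field E] [Fintype E]
    [DecidableEq E] (hE : Fintype.card E = q ^ n) :
    (Finset.univ.filter (fun x : E => x ^ q = x)).card = q := by
  have hqn2 : 2 ≤ q ^ n := le_trans hq2 (Nat.le_self_pow hn.ne' q)
  set f : E[X] := X ^ q - X with hf
  set g : E[X] := X ^ (q ^ n) - X with hg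
  have hdegf : f.natDegree = q := by
    rw [hf]
    rw [natDegree_sub_eq_left_of_natDegree_lt (by simpa using (show 1 < q by omega))]
    simp
  have hdegg : g.natDegree = q ^ n := by
    rw [hg]
    rw [natDegree_sub_eq_left_of_natDegree_lt (by simpa using (show 1 < q ^ n by omega))]
    simp
  have hf0 : f ≠ 0 := fun h => by simp [h, hq2] at hdegf; omega
  have hg0 : g ≠ 0 := fun h => by simp [h] at hdegg; omega
  -- f ∣ g
  have hdvdnat : q - 1 ∣ q ^ n - 1 := by
    simpa using Nat.sub_dvd_pow_sub_pow q 1 n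
  have hdvd : f ∣ g := by
    obtain ⟨t, ht⟩ := hdvdnat
    have h1 : f = X * (X ^ (q - 1) - 1) := by
      rw [hf, mul_sub, mul_one, ← pow_succ']
      congr 2
      omega
    have h2 : g = X * (X ^ (q ^ n - 1) - 1) := by
      rw [hg, mul_sub, mul_one, ← pow_succ']
      congr 2
      omega
    rw [h1, h2]
    refine mul_dvd_mul_left _ ?_
    have := sub_dvd_pow_sub_pow (X ^ (q - 1) : E[X]) 1 t
    simpa [← pow_mul, ← ht] using this
  -- roots of g are everything
  have hrootsg : g.roots = Finset.univ.val := by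
    have hle : (Finset.univ.val : Multiset E) ≤ g.roots := by
      rw [Multiset.le_iff_count]
      intro a
      rw [count_roots]
      have : Multiset.count a Finset.univ.val = 1 :=
        Multiset.count_eq_one_of_mem Finset.univ.nodup (Finset.mem_univ a)
      rw [this]
      rw [Nat.one_le_iff_ne_zero, ← Nat.pos_iff_ne_zero]
      rw [rootMultiplicity_pos hg0]
      simp only [IsRoot, hg, eval_sub, eval_pow, eval_X]
      rw [← hE, FiniteField.pow_card, sub_self]
    refine (Multiset.eq_of_le_of_card_le hle ?_).symm
    calc Multiset.card g.roots ≤ g.natDegree := card_roots' g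
      _ = q ^ n := hdegg
      _ = Multiset.card (Finset.univ.val : Multiset E) := by simp [hE]
  obtain ⟨h, hfh⟩ := hdvd
  have hh0 : h ≠ 0 := by rintro rfl; rw [mul_zero] at hfh; exact hg0 hfh
  have hrootsmul : g.roots = f.roots + h.roots := by rw [hfh]; exact roots_mul (hfh ▸ hg0)
  have hdegh : h.natDegree = q ^ n - q := by
    have := natDegree_mul hf0 hh0
    rw [← hfh, hdegg, hdegf] at this
    omega
  have hcardsuniv : Multiset.card (Finset.univ.val : Multiset E) = q ^ n := by
    rw [show Multiset.card (Finset.univ.val : Multiset E) = Finset.univ.card from rfl,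
      Finset.card_univ, hE]
  have hcards : Multiset.card f.roots + Multiset.card h.roots = q ^ n := by
    have h' := congrArg Multiset.card hrootsmul
    rw [hrootsg, hcardsuniv, Multiset.card_add] at h'
    omega
  have hcardf : Multiset.card f.roots = q := by
    have h1 := card_roots' f
    have h2 := card_roots' h
    rw [hdegf] at h1
    rw [hdegh] at h2
    have h3 : q ≤ q ^ n := Nat.le_self_pow hn.ne' q
    omega
  -- nodup
  have hnodupf : f.roots.Nodup := by
    have : f.roots ≤ g.roots := hrootsmul ▸ Multiset.le_add_right _ _
    exact Multiset.nodup_of_le this (hrootsg ▸ Finset.univ.nodup)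
  have hset : Finset.univ.filter (fun x : E => x ^ q = x) = f.roots.toFinset := by
    ext x
    simp only [Finset.mem_filter, Finset.mem_univ, true_and, Multiset.mem_toFinset,
      mem_roots hf0, IsRoot, hf, eval_sub, eval_pow, eval_X, sub_eq_zero]
    simp only [mem_roots (show (X ^ q - X : E[X]) ≠ 0 from hf0), IsRoot, eval_sub, eval_pow, eval_X, sub_eq_zero]
  rw [hset, Multiset.toFinset_card_of_nodup hnodupf, hcardf]

private lemma aux_conj_fixed {E : Type*} [Monoid E] {q m : ℕ} {a : E}
    (haF : a ^ q ^ m = a) (i : ℕ) : (a ^ q ^ i) ^ q ^ m = a ^ q ^ i := by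
  rw [pow_right_comm, haF]

private lemma aux_sum_fixed {q m : ℕ} {E : Type*} [Field E]
    (frob : ∀ j : ℕ, ∃ φ : E →+* E, ∀ x, φ x = x ^ q ^ j)
    (a : E) (haF : a ^ q ^ m = a) (c : Fin m → E) (hc : ∀ i, c i ^ q = c i) :
    (∑ i, c i * a ^ q ^ (i : ℕ)) ^ q ^ m = ∑ i, c i * a ^ q ^ (i : ℕ) := by
  obtain ⟨φ, hφ⟩ := frob m
  rw [← hφ, map_sum]
  refine Finset.sum_congr rfl fun i _ => ?_
  rw [map_mul, hφ, hφ, aux_pow_q_fixed (hc i), aux_conj_fixed haF]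

private lemma aux_card_fixed_s9 {q m : ℕ} {E : Type*} [Field E] [Fintype E] [DecidableEq E]
    (frob : ∀ j : ℕ, ∃ φ : E →+* E, ∀ x, φ x = x ^ q ^ j)
    (a : E) (haF : a ^ q ^ m = a)
    (ha : ∀ x : E, x ^ q ^ m = x → ∃! c : Fin m → E,
      (∀ i, c i ^ q = c i) ∧ x = ∑ i, c i * a ^ q ^ (i : ℕ))
    (hK : Fintype.card {x : E // x ^ q = x} = q) :
    Fintype.card {x : E // x ^ q ^ m = x} = q ^ m := by
  let F : (Fin m → {x : E // x ^ q = x}) → {x : E // x ^ q ^ m = x} := fun c =>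
    ⟨∑ i, (c i : E) * a ^ q ^ (i : ℕ),
      aux_sum_fixed frob a haF (fun i => (c i : E)) (fun i => (c i).2)⟩
  have hbij : Function.Bijective F := by
    constructor
    · intro c c' hcc
      obtain ⟨d, -, hd⟩ := ha (F c : E) (F c).2
      have e1 : (fun i => (c i : E)) = d :=
        hd _ ⟨fun i => (c i).2, rfl⟩
      have e2 : (fun i => (c' i : E)) = d :=
        hd _ ⟨fun i => (c' i).2, congrArg Subtype.val hcc⟩
      funext i
      exact Subtype.ext (by rw [show (c i : E) = d i from congrFun e1 i,
        show (c' i : E) = d i from congrFun e2 i])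
    · intro x
      obtain ⟨d, ⟨hd1, hd2⟩, -⟩ := ha (x : E) x.2
      exact ⟨fun i => ⟨d i, hd1 i⟩, Subtype.ext hd2.symm⟩
  have := Fintype.card_of_bijective hbij
  rw [← this, Fintype.card_fun, hK, Fintype.card_fin]

private lemma aux_indep {q n₁ n₂ : ℕ} {E : Type*} [Field E] [Fintype E] [DecidableEq E]
    (hq2 : 2 ≤ q) (h₁ : 0 < n₁)
    (hcop : Nat.Coprime n₁ n₂)
    (frob : ∀ j : ℕ, ∃ φ : E →+* E, ∀ x, φ x = x ^ q ^ j)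
    {a₁ : E} (ha₁F : a₁ ^ q ^ n₁ = a₁)
    (ha₁ : ∀ x : E, x ^ q ^ n₁ = x → ∃ c : Fin n₁ → E,
      (∀ i, c i ^ q = c i) ∧ x = ∑ i, c i * a₁ ^ q ^ (i : ℕ))
    (hK₁ : Fintype.card {x : E // x ^ q ^ n₁ = x} = q ^ n₁)
    (e : Fin n₁ → E) (he : ∀ i, e i ^ q ^ n₂ = e i)
    (hrel : ∑ i, e i * a₁ ^ q ^ (i : ℕ) = 0) : ∀ i, e i = 0 := by
  -- shifted relations, first by multiples of n₂
  have Rmul : ∀ t : ℕ, ∑ i : Fin n₁, e i * a₁ ^ q ^ (((i : ℕ) + t * n₂) % n₁) = 0 := by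
    intro t
    induction t with
    | zero =>
      rw [← hrel]
      refine Finset.sum_congr rfl fun i _ => ?_
      rw [Nat.zero_mul, Nat.add_zero, Nat.mod_eq_of_lt i.isLt]
    | succ t ih =>
      obtain ⟨φ, hφ⟩ := frob n₂
      have h0 := congrArg φ ih
      rw [map_sum, map_zero] at h0
      rw [← h0]
      refine Finset.sum_congr rfl fun i _ => ?_
      rw [map_mul, hφ, hφ, he i, ← pow_mul, ← pow_add]
      congr 1
      conv_rhs => rw [aux_pow_pow_mod ha₁F]
      rw [Nat.mod_add_mod]
      have harith : (i : ℕ) + (t + 1) * n₂ = (i : ℕ) + t * n₂ + n₂ := by ring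
      rw [harith]
  -- shifted relations for all shifts
  have R : ∀ s : ℕ, ∑ i : Fin n₁, e i * a₁ ^ q ^ (((i : ℕ) + s) % n₁) = 0 := by
    intro s
    haveI : NeZero n₁ := ⟨h₁.ne'⟩
    set u := ZMod.unitOfCoprime n₂ hcop.symm with hu
    set t := ((s : ZMod n₁) * ((u⁻¹ : (ZMod n₁)ˣ) : ZMod n₁)).val with htdef
    have ht : t * n₂ ≡ s [MOD n₁] := by
      have hcast : ((t * n₂ : ℕ) : ZMod n₁) = ((s : ℕ) : ZMod n₁) := by
        push_cast
        rw [htdef, ZMod.natCast_val, ZMod.cast_id]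
        have hn₂ : ((n₂ : ℕ) : ZMod n₁) = (u : ZMod n₁) := (ZMod.coe_unitOfCoprime n₂ hcop.symm).symm
        rw [hn₂, mul_assoc, Units.inv_mul, mul_one]
      exact (ZMod.natCast_eq_natCast_iff _ _ _).mp hcast
    rw [← Rmul t]
    refine Finset.sum_congr rfl fun i _ => ?_
    have hmod : ((i : ℕ) + s) % n₁ = ((i : ℕ) + t * n₂) % n₁ :=
      (Nat.ModEq.add_left (i : ℕ) ht).symm
    rw [hmod]
  -- polynomial argument
  by_contra hcon
  push_neg at hcon
  obtain ⟨i₀, hi₀⟩ := hcon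
  set P : Polynomial E := ∑ i : Fin n₁, C (e i) * X ^ q ^ (i : ℕ) with hPdef
  have hP0 : P ≠ 0 := by
    intro h
    have hco : P.coeff (q ^ (i₀ : ℕ)) = e i₀ := by
      rw [hPdef, finset_sum_coeff]
      rw [Finset.sum_eq_single i₀]
      · rw [coeff_C_mul, coeff_X_pow, if_pos rfl, mul_one]
      · intro i _ hne
        rw [coeff_C_mul, coeff_X_pow, if_neg, mul_zero]
        intro hc
        exact hne (Fin.ext (Nat.pow_right_injective hq2 hc.symm))
      · intro hi; exact absurd (Finset.mem_univ i₀) hi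
    rw [h, coeff_zero] at hco
    exact hi₀ hco.symm
  have hroots : ∀ x : E, x ^ q ^ n₁ = x → P.eval x = 0 := by
    intro x hx
    obtain ⟨c, hc, rfl⟩ := ha₁ x hx
    have key : ∀ i : Fin n₁, (∑ s : Fin n₁, c s * a₁ ^ q ^ (s : ℕ)) ^ q ^ (i : ℕ)
        = ∑ s : Fin n₁, c s * a₁ ^ q ^ (((s : ℕ) + (i : ℕ)) % n₁) := by
      intro i
      obtain ⟨φ, hφ⟩ := frob (i : ℕ)
      rw [← hφ, map_sum]
      refine Finset.sum_congr rfl fun s _ => ?_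
      rw [map_mul, hφ, hφ, aux_pow_q_fixed (hc s), ← pow_mul, ← pow_add,
        aux_pow_pow_mod ha₁F]
    rw [hPdef, eval_finset_sum]
    simp only [eval_mul, eval_C, eval_pow, eval_X]
    calc ∑ i : Fin n₁, e i * (∑ s : Fin n₁, c s * a₁ ^ q ^ (s : ℕ)) ^ q ^ (i : ℕ)
        = ∑ i : Fin n₁, ∑ s : Fin n₁, e i * (c s * a₁ ^ q ^ (((s : ℕ) + (i : ℕ)) % n₁)) := by
          refine Finset.sum_congr rfl fun i _ => ?_
          rw [key i, Finset.mul_sum]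
      _ = ∑ s : Fin n₁, c s * ∑ i : Fin n₁, e i * a₁ ^ q ^ (((i : ℕ) + (s : ℕ)) % n₁) := by
          rw [Finset.sum_comm]
          refine Finset.sum_congr rfl fun s _ => ?_
          rw [Finset.mul_sum]
          refine Finset.sum_congr rfl fun i _ => ?_
          rw [Nat.add_comm (s : ℕ) (i : ℕ)]
          ring
      _ = 0 := by
          refine Finset.sum_eq_zero fun s _ => ?_
          rw [R (s : ℕ), mul_zero]
  have hsubset : (Finset.univ.filter fun x : E => x ^ q ^ n₁ = x) ⊆ P.roots.toFinset := by
    intro x hx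
    rw [Multiset.mem_toFinset, mem_roots hP0]
    exact hroots x (Finset.mem_filter.mp hx).2
  have hfc : (Finset.univ.filter fun x : E => x ^ q ^ n₁ = x).card = q ^ n₁ := by
    rw [← Fintype.card_subtype]
    exact hK₁
  have h1 : q ^ n₁ ≤ P.roots.toFinset.card := hfc ▸ Finset.card_le_card hsubset
  have h2 : P.roots.toFinset.card ≤ q ^ (n₁ - 1) := by
    calc P.roots.toFinset.card ≤ Multiset.card P.roots := Multiset.toFinset_card_le _
      _ ≤ P.natDegree := card_roots' P
      _ ≤ q ^ (n₁ - 1) := by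
          refine natDegree_sum_le_of_forall_le _ _ fun i _ => ?_
          have hi := i.isLt
          calc (C (e i) * X ^ q ^ (i : ℕ)).natDegree ≤ (X ^ q ^ (i : ℕ) : Polynomial E).natDegree :=
                natDegree_C_mul_le _ _
            _ ≤ q ^ (i : ℕ) := by rw [natDegree_X_pow]
            _ ≤ q ^ (n₁ - 1) := Nat.pow_le_pow_right (by omega) (by omega)
  have hlt : q ^ (n₁ - 1) < q ^ n₁ := Nat.pow_lt_pow_right hq2 (by omega)
  omega

/-- Lemma 4.3: Let `q` be a prime power and `n = n₁ n₂` with `n₁, n₂`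
relatively prime.  If `aᵢ ∈ F_{q^{nᵢ}}` is `q^{nᵢ}/q`-normal for `i = 1, 2`, then the
product `a₁ a₂` is `q^n/q`-normal. -/
theorem stmt9 (q n n₁ n₂ : ℕ) (hq : IsPrimePow q) (h₁ : 0 < n₁) (h₂ : 0 < n₂)
    (hn : n = n₁ * n₂) (hcop : Nat.Coprime n₁ n₂)
    (E : Type) [Field E] [Fintype E] (hE : Fintype.card E = q ^ n)
    (a₁ a₂ : E) (ha₁F : a₁ ^ q ^ n₁ = a₁) (ha₂F : a₂ ^ q ^ n₂ = a₂)
    (ha₁ : IsNormalElemIn q 1 n₁ a₁) (ha₂ : IsNormalElemIn q 1 n₂ a₂) :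
    IsNormalElemIn q 1 n (a₁ * a₂) := by
  classical
  subst hn
  have hq2 : 2 ≤ q := hq.two_le
  have hq0 : q ≠ 0 := by omega
  have hn1 : 0 < n₁ * n₂ := Nat.mul_pos h₁ h₂
  -- characteristic and Frobenius
  obtain ⟨p, k, hp, hk, hqpk⟩ := hq
  have hpp : p.Prime := Nat.prime_iff.mpr hp
  haveI := Fact.mk hpp
  haveI hchar : CharP E p := by
    obtain ⟨r, hr⟩ := CharP.exists E
    haveI := hr
    have hrp : r.Prime := CharP.char_is_prime E r
    have hcast : ((Fintype.card E : ℕ) : E) = 0 := Nat.cast_card_eq_zero E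
    have hdvd : r ∣ q ^ (n₁ * n₂) := by
      rw [← hE]
      exact (CharP.cast_eq_zero_iff E r _).mp hcast
    have hrq : r = p := by
      have hdp : r ∣ p := by
        have : r ∣ p ^ (k * (n₁ * n₂)) := by
          rw [pow_mul, hqpk]
          exact hdvd
        exact hrp.dvd_of_dvd_pow this
      exact (Nat.prime_dvd_prime_iff_eq hrp hpp).mp hdp
    rwa [hrq] at hr
  have frob : ∀ j : ℕ, ∃ φ : E →+* E, ∀ x : E, φ x = x ^ q ^ j := by
    intro j
    refine ⟨iterateFrobenius E p (k * j), fun x => ?_⟩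
    rw [iterateFrobenius_def]
    congr 1
    rw [pow_mul, hqpk]
  -- cleaned hypotheses
  have ha₁' : ∀ x : E, x ^ q ^ n₁ = x → ∃! c : Fin n₁ → E,
      (∀ i, c i ^ q = c i) ∧ x = ∑ i, c i * a₁ ^ q ^ (i : ℕ) := by
    intro x hx
    have := ha₁ x hx
    rw [Nat.div_one] at this
    simpa only [pow_one, one_mul] using this
  have ha₂' : ∀ x : E, x ^ q ^ n₂ = x → ∃! c : Fin n₂ → E,
      (∀ i, c i ^ q = c i) ∧ x = ∑ i, c i * a₂ ^ q ^ (i : ℕ) := by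
    intro x hx
    have := ha₂ x hx
    rw [Nat.div_one] at this
    simpa only [pow_one, one_mul] using this
  have ha₁e : ∀ x : E, x ^ q ^ n₁ = x → ∃ c : Fin n₁ → E,
      (∀ i, c i ^ q = c i) ∧ x = ∑ i, c i * a₁ ^ q ^ (i : ℕ) :=
    fun x hx => ⟨(ha₁' x hx).choose, (ha₁' x hx).choose_spec.1⟩
  -- cardinalities
  have hK : Fintype.card {x : E // x ^ q = x} = q := by
    rw [Fintype.card_subtype]
    exact aux_cardK hq2 hn1 E hE
  have hK₁ : Fintype.card {x : E // x ^ q ^ n₁ = x} = q ^ n₁ :=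
    aux_card_fixed_s9 frob a₁ ha₁F ha₁' hK
  -- CRT bijection
  let toPair : Fin (n₁ * n₂) → Fin n₁ × Fin n₂ := fun k =>
    (⟨(k : ℕ) % n₁, Nat.mod_lt _ h₁⟩, ⟨(k : ℕ) % n₂, Nat.mod_lt _ h₂⟩)
  have hbij : Function.Bijective toPair := by
    rw [Fintype.bijective_iff_injective_and_card]
    constructor
    · intro a b hab
      have hm1 : (a : ℕ) % n₁ = (b : ℕ) % n₁ := congrArg (fun z => (z.1 : ℕ)) hab
      have hm2 : (a : ℕ) % n₂ = (b : ℕ) % n₂ := congrArg (fun z => (z.2 : ℕ)) hab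
      have hmn : (a : ℕ) ≡ (b : ℕ) [MOD n₁ * n₂] :=
        (Nat.modEq_and_modEq_iff_modEq_mul hcop).mp ⟨hm1, hm2⟩
      exact Fin.ext (by rwa [Nat.ModEq, Nat.mod_eq_of_lt a.isLt, Nat.mod_eq_of_lt b.isLt] at hmn)
    · simp
  let ψ : Fin (n₁ * n₂) ≃ Fin n₁ × Fin n₂ := Equiv.ofBijective toPair hbij
  have hψ1 : ∀ k : Fin (n₁ * n₂), (((ψ k).1 : ℕ)) = (k : ℕ) % n₁ := fun k => rfl
  have hψ2 : ∀ k : Fin (n₁ * n₂), (((ψ k).2 : ℕ)) = (k : ℕ) % n₂ := fun k => rfl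
  -- linear independence over K of the conjugates of a₁ * a₂
  have hindep : ∀ d : Fin (n₁ * n₂) → E, (∀ i, d i ^ q = d i) →
      ∑ i, d i * (a₁ * a₂) ^ q ^ (i : ℕ) = 0 → ∀ i, d i = 0 := by
    intro d hd hsum
    have hb : ∀ m : ℕ, (a₁ * a₂) ^ q ^ m = a₁ ^ q ^ (m % n₁) * a₂ ^ q ^ (m % n₂) := by
      intro m
      rw [mul_pow, aux_pow_pow_mod ha₁F, aux_pow_pow_mod ha₂F]
    set e : Fin n₁ → E := fun i => ∑ j : Fin n₂, d (ψ.symm (i, j)) * a₂ ^ q ^ (j : ℕ) with he_def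
    have he : ∀ i, e i ^ q ^ n₂ = e i := by
      intro i
      obtain ⟨φ, hφ⟩ := frob n₂
      show (∑ j : Fin n₂, d (ψ.symm (i, j)) * a₂ ^ q ^ (j : ℕ)) ^ q ^ n₂ = _
      rw [← hφ, map_sum]
      refine Finset.sum_congr rfl fun j _ => ?_
      rw [map_mul, hφ, hφ, aux_pow_q_fixed (hd _), aux_conj_fixed ha₂F]
    have hrel : ∑ i, e i * a₁ ^ q ^ (i : ℕ) = 0 := by
      calc ∑ i, e i * a₁ ^ q ^ (i : ℕ)
          = ∑ pr : Fin n₁ × Fin n₂, d (ψ.symm pr) * a₂ ^ q ^ ((pr.2 : ℕ)) * a₁ ^ q ^ ((pr.1 : ℕ)) := by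
            rw [Fintype.sum_prod_type]
            refine Finset.sum_congr rfl fun i _ => ?_
            rw [Finset.sum_mul]
        _ = ∑ m : Fin (n₁ * n₂), d (ψ.symm (ψ m)) * a₂ ^ q ^ (((ψ m).2 : ℕ)) * a₁ ^ q ^ (((ψ m).1 : ℕ)) :=
            (Equiv.sum_comp ψ _).symm
        _ = ∑ m : Fin (n₁ * n₂), d m * (a₁ * a₂) ^ q ^ (m : ℕ) := by
            refine Finset.sum_congr rfl fun m _ => ?_
            rw [Equiv.symm_apply_apply, hb, hψ1, hψ2]
            ring
        _ = 0 := hsum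
    have he0 : ∀ i, e i = 0 :=
      aux_indep hq2 h₁ hcop frob ha₁F ha₁e hK₁ e he hrel
    have hd0 : ∀ (i : Fin n₁) (j : Fin n₂), d (ψ.symm (i, j)) = 0 := by
      intro i
      have h0fix : (0 : E) ^ q ^ n₂ = 0 := zero_pow (pow_ne_zero _ hq0)
      obtain ⟨c0, hc0, huniq⟩ := ha₂' 0 h0fix
      have hz : (fun _ : Fin n₂ => (0 : E)) = c0 := by
        refine huniq _ ⟨fun j => by simp [hq0], by simp⟩
      have hdz : (fun j : Fin n₂ => d (ψ.symm (i, j))) = c0 := by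
        refine huniq _ ⟨fun j => hd _, (he0 i).symm⟩
      intro j
      calc d (ψ.symm (i, j)) = c0 j := congrFun hdz j
        _ = 0 := (congrFun hz j).symm
    intro m
    have := hd0 (ψ m).1 (ψ m).2
    rwa [Prod.mk.eta, Equiv.symm_apply_apply] at this
  -- conclusion
  intro x hx
  rw [Nat.div_one]
  simp only [pow_one, one_mul]
  let T := {y : E // y ^ q = y}
  let Φ : (Fin (n₁ * n₂) → T) → E := fun c => ∑ i, (c i : E) * (a₁ * a₂) ^ q ^ (i : ℕ)
  have hinj : Function.Injective Φ := by
    intro c c' hcc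
    have hfix : ∀ i : Fin (n₁ * n₂), ((c i : E) - (c' i : E)) ^ q = (c i : E) - (c' i : E) := by
      intro i
      obtain ⟨φ, hφ⟩ := frob 1
      have hφ1 : ∀ y : E, φ y = y ^ q := by
        intro y
        rw [hφ, pow_one]
      rw [← hφ1, map_sub, hφ1, hφ1, (c i).2, (c' i).2]
    have hzero : ∑ i, ((c i : E) - (c' i : E)) * (a₁ * a₂) ^ q ^ (i : ℕ) = 0 := by
      simp only [sub_mul]
      rw [Finset.sum_sub_distrib]
      rw [show ∑ i, (c i : E) * (a₁ * a₂) ^ q ^ (i : ℕ) = Φ c from rfl,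
        show ∑ i, (c' i : E) * (a₁ * a₂) ^ q ^ (i : ℕ) = Φ c' from rfl, hcc, sub_self]
    have := hindep _ hfix hzero
    funext i
    exact Subtype.ext (sub_eq_zero.mp (this i))
  have hcard : Fintype.card (Fin (n₁ * n₂) → T) = Fintype.card E := by
    rw [Fintype.card_fun, Fintype.card_fin, hE]
    rw [show Fintype.card T = q from hK]
  have hbijΦ : Function.Bijective Φ :=
    (Fintype.bijective_iff_injective_and_card Φ).mpr ⟨hinj, hcard⟩
  obtain ⟨c, hc⟩ := hbijΦ.2 x
  refine ⟨fun i => (c i : E), ⟨fun i => (c i).2, hc.symm⟩, ?_⟩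
  rintro c' ⟨hc'1, hc'2⟩
  have heq : Φ (fun i => ⟨c' i, hc'1 i⟩) = Φ c := by
    rw [hc]
    exact hc'2.symm
  have := hbijΦ.1 heq
  funext i
  exact congrArg (fun g => (g i : E)) this
end

section
/- Let q be a prime power and n a positive integer. Then W(x^n − 1) ≤ 2^{(n + gcd(n, q−1))/2}, where W(x^n − 1) is the number of squarefree monic divisors of x^n − 1 in F_q[x]. In particular, W(x^n − 1) ≤ 2^n, with equality if and only if n divides q − 1; furthermore, if n does not divide q − 1, then W(x^n − 1) ≤ 2^{3n/4}. -/
/-- `W(f)`: the number of squarefree monic divisors of a polynomial `f`. -/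
noncomputable def Wpoly {F : Type*} [Field F] (f : Polynomial F) : ℕ :=
  {g : Polynomial F | g.Monic ∧ Squarefree g ∧ g ∣ f}.ncard

open Polynomial UniqueFactorizationMonoid


variable {F : Type*} [Field F] [DecidableEq F]

/-- A normalized prime dividing a nonzero element is a normalized factor. -/
lemma mem_nf {p f : Polynomial F} (hf : f ≠ 0) (hp : Prime p) (hnorm : normalize p = p)
    (hd : p ∣ f) : p ∈ normalizedFactors f := by
  obtain ⟨q, hq, hassoc⟩ := exists_mem_normalizedFactors_of_dvd hf hp.irreducible hd
  have : p = q := by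
    rw [← hnorm, ← normalize_normalized_factor q hq, normalize_eq_normalize_iff]
    exact hassoc.dvd_dvd
  rwa [this]

lemma nf_prod_finset (s : Finset (Polynomial F))
    (hs : ∀ h ∈ s, Prime h ∧ normalize h = h) :
    normalizedFactors (∏ h ∈ s, h) = s.val := by
  have h0 : (0 : Polynomial F) ∉ s.val := fun h => (hs 0 h).1.ne_zero rfl
  have : (∏ h ∈ s, h) = s.val.prod := by
    rw [Finset.prod_eq_multiset_prod, Multiset.map_id']
  rw [this, normalizedFactors_multiset_prod _ h0]
  have : s.val.map normalizedFactors = s.val.map (fun h => {h}) := by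
    apply Multiset.map_congr rfl
    intro h hh
    rw [normalizedFactors_irreducible (hs h hh).1.irreducible, (hs h hh).2]
  rw [this]
  simp

lemma Wpoly_eq_two_pow {f : Polynomial F} (hf : f ≠ 0) :
    Wpoly f = 2 ^ (normalizedFactors f).toFinset.card := by
  have hT : ∀ h ∈ (normalizedFactors f).toFinset,
      Prime h ∧ normalize h = h ∧ h.Monic ∧ h ∣ f := by
    intro h hh
    rw [Multiset.mem_toFinset] at hh
    have h1 := prime_of_normalized_factor h hh
    have h2 := normalize_normalized_factor h hh
    refine ⟨h1, h2, ?_, dvd_of_mem_normalizedFactors hh⟩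
    have := monic_normalize (p := h) h1.ne_zero
    rwa [h2] at this
  have hset : {g : Polynomial F | g.Monic ∧ Squarefree g ∧ g ∣ f}
      = ↑(((normalizedFactors f).toFinset.powerset).image fun s => ∏ h ∈ s, h) := by
    ext g
    simp only [Set.mem_setOf_eq, Finset.coe_image, Set.mem_image, Finset.mem_coe,
      Finset.mem_powerset]
    constructor
    · rintro ⟨hM, hSq, hdvd⟩
      have hg0 : g ≠ 0 := hSq.ne_zero
      have hnd : (normalizedFactors g).Nodup :=
        (squarefree_iff_nodup_normalizedFactors hg0).mp hSq
      refine ⟨(normalizedFactors g).toFinset, ?_, ?_⟩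
      · intro h hh
        rw [Multiset.mem_toFinset] at hh ⊢
        exact mem_nf hf (prime_of_normalized_factor h hh)
          (normalize_normalized_factor h hh)
          ((dvd_of_mem_normalizedFactors hh).trans hdvd)
      · have hval : (normalizedFactors g).toFinset.val = normalizedFactors g :=
          Multiset.Nodup.dedup hnd
        have : (∏ h ∈ (normalizedFactors g).toFinset, h) = (normalizedFactors g).prod := by
          rw [Finset.prod_eq_multiset_prod, Multiset.map_id', hval]
        have hmono : (∏ h ∈ (normalizedFactors g).toFinset, h).Monic := by
          apply monic_prod_of_monic
          intro h hh
          rw [Multiset.mem_toFinset] at hh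
          have h1 := prime_of_normalized_factor h hh
          have h2 := normalize_normalized_factor h hh
          have := monic_normalize (p := h) h1.ne_zero
          rwa [h2] at this
        rw [this] at hmono
        rw [this]
        exact eq_of_monic_of_associated hmono hM (prod_normalizedFactors hg0)
    · rintro ⟨s, hsub, rfl⟩
      have hs : ∀ h ∈ s, Prime h ∧ normalize h = h := fun h hh =>
        ⟨(hT h (hsub hh)).1, (hT h (hsub hh)).2.1⟩
      have hnf := nf_prod_finset s hs
      have hg0 : (∏ h ∈ s, h) ≠ 0 :=
        Finset.prod_ne_zero_iff.mpr fun h hh => (hs h hh).1.ne_zero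
      refine ⟨?_, ?_, ?_⟩
      · exact monic_prod_of_monic _ _ fun h hh => (hT h (hsub hh)).2.2.1
      · rw [squarefree_iff_nodup_normalizedFactors hg0, hnf]
        exact s.nodup
      · have hle : s.val ≤ normalizedFactors f := by
          rw [Multiset.le_iff_subset s.nodup]
          intro h hh
          have := hsub hh
          rwa [Multiset.mem_toFinset] at this
        have : (∏ h ∈ s, h) = s.val.prod := by
          rw [Finset.prod_eq_multiset_prod, Multiset.map_id']
        rw [this]
        exact (Multiset.prod_dvd_prod_of_le hle).trans (prod_normalizedFactors hf).dvd
  rw [Wpoly, hset, Set.ncard_coe_finset, Finset.card_image_of_injOn, Finset.card_powerset]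
  intro s hsm t htm hst
  rw [Finset.mem_coe, Finset.mem_powerset] at hsm htm
  have hs : ∀ h ∈ s, Prime h ∧ normalize h = h := fun h hh =>
    ⟨(hT h (hsm hh)).1, (hT h (hsm hh)).2.1⟩
  have ht : ∀ h ∈ t, Prime h ∧ normalize h = h := fun h hh =>
    ⟨(hT h (htm hh)).1, (hT h (htm hh)).2.1⟩
  have hst' : (∏ h ∈ s, h) = ∏ h ∈ t, h := hst
  have := nf_prod_finset s hs
  rw [hst', nf_prod_finset t ht] at this
  exact Finset.val_inj.mp this.symm

section Finite

variable {K : Type} [Field K] [Fintype K] [DecidableEq K]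

lemma card_nthRootsFinset_eq_gcd {m : ℕ} (hm : 0 < m) :
    (nthRootsFinset m (1 : K)).card = Nat.gcd m (Fintype.card K - 1) := by
  set q := Fintype.card K with hq
  set d := Nat.gcd m (q - 1) with hd
  have hq1 : 0 < q - 1 := by
    have : 1 < q := Fintype.one_lt_card
    omega
  have hd0 : 0 < d := Nat.gcd_pos_of_pos_left _ hm
  have hdq : d ∣ q - 1 := Nat.gcd_dvd_right _ _
  have hdm : d ∣ m := Nat.gcd_dvd_left _ _
  have hsets : nthRootsFinset m (1 : K) = nthRootsFinset d (1 : K) := by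
    ext x
    rw [mem_nthRootsFinset hm, mem_nthRootsFinset hd0]
    constructor
    · intro hx
      have hx0 : x ≠ 0 := by
        rintro rfl
        rw [zero_pow hm.ne'] at hx
        exact zero_ne_one hx
      have h1 : orderOf x ∣ m := orderOf_dvd_of_pow_eq_one hx
      have h2 : orderOf x ∣ q - 1 :=
        orderOf_dvd_of_pow_eq_one (FiniteField.pow_card_sub_one_eq_one x hx0)
      exact orderOf_dvd_iff_pow_eq_one.mp (Nat.dvd_gcd h1 h2)
    · intro hx
      obtain ⟨k, hk⟩ := hdm
      rw [hk, pow_mul, hx, one_pow]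
  rw [hsets]
  obtain ⟨g, hg⟩ := IsCyclic.exists_generator (α := Kˣ)
  have hordg : orderOf g = q - 1 := by
    rw [orderOf_eq_card_of_forall_mem_zpowers hg, Nat.card_eq_fintype_card,
      Fintype.card_units, hq]
  have hord : orderOf (g ^ ((q - 1) / d)) = d := by
    rw [orderOf_pow, hordg, Nat.gcd_eq_right (Nat.div_dvd_of_dvd hdq),
      Nat.div_div_self hdq hq1.ne']
  have hprim : IsPrimitiveRoot ((g ^ ((q - 1) / d) : Kˣ) : K) d := by
    have := IsPrimitiveRoot.orderOf (g ^ ((q - 1) / d))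
    rw [hord] at this
    exact IsPrimitiveRoot.coe_units_iff.mpr this
  exact hprim.card_nthRootsFinset

lemma omega_facts {m : ℕ} (hm : 0 < m) (hmK : (m : K) ≠ 0) :
    2 * (normalizedFactors ((X : Polynomial K) ^ m - 1)).toFinset.card
        ≤ m + Nat.gcd m (Fintype.card K - 1)
      ∧ (normalizedFactors ((X : Polynomial K) ^ m - 1)).toFinset.card ≤ m
      ∧ Nat.gcd m (Fintype.card K - 1)
        ≤ (normalizedFactors ((X : Polynomial K) ^ m - 1)).toFinset.card := by
  set g : Polynomial K := (X : Polynomial K) ^ m - 1 with hgdef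
  have hC : g = X ^ m - C 1 := by rw [map_one]
  have hmonic : g.Monic := by rw [hC]; exact monic_X_pow_sub_C 1 hm.ne'
  have hg0 : g ≠ 0 := hmonic.ne_zero
  have hdegg : g.natDegree = m := by rw [hC]; exact natDegree_X_pow_sub_C
  have hsq : Squarefree g := (X_pow_sub_one_separable_iff.mpr hmK).squarefree
  have hnd : (normalizedFactors g).Nodup :=
    (squarefree_iff_nodup_normalizedFactors hg0).mp hsq
  set P := (normalizedFactors g).toFinset with hPdef
  have hval : P.val = normalizedFactors g := Multiset.Nodup.dedup hnd
  have hmemP : ∀ h ∈ P, Prime h ∧ h.Monic ∧ h ∣ g ∧ 1 ≤ h.natDegree := by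
    intro h hh
    rw [hPdef, Multiset.mem_toFinset] at hh
    have h1 := prime_of_normalized_factor h hh
    have h2 := normalize_normalized_factor h hh
    have hmono : h.Monic := by
      have := monic_normalize (p := h) h1.ne_zero
      rwa [h2] at this
    exact ⟨h1, hmono, dvd_of_mem_normalizedFactors hh, h1.irreducible.natDegree_pos⟩
  have hprodm : (∏ h ∈ P, h).Monic :=
    monic_prod_of_monic _ _ fun h hh => (hmemP h hh).2.1
  have heqprod : (∏ h ∈ P, h) = (normalizedFactors g).prod := by
    rw [Finset.prod_eq_multiset_prod, Multiset.map_id', hval]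
  have hprod : (∏ h ∈ P, h) = g :=
    eq_of_monic_of_associated hprodm hmonic (by rw [heqprod]; exact prod_normalizedFactors hg0)
  have hdeg : m = ∑ h ∈ P, h.natDegree := by
    rw [← hdegg, ← hprod, natDegree_prod _ _ fun h hh => (hmemP h hh).1.ne_zero]
  -- linear factors
  have hlineq : P.filter (fun h => h.natDegree = 1)
      = (nthRootsFinset m (1 : K)).image (fun r => X - C r) := by
    ext h
    rw [Finset.mem_filter, Finset.mem_image]
    constructor
    · rintro ⟨hhP, hdeg1⟩
      obtain ⟨hp, hmono, hdvd, -⟩ := hmemP h hhP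
      have heq : h = X + C (h.coeff 0) := hmono.eq_X_add_C hdeg1
      refine ⟨-(h.coeff 0), ?_, ?_⟩
      · rw [mem_nthRootsFinset hm]
        have hroot : g.eval (-(h.coeff 0)) = 0 := by
          apply eval_eq_zero_of_dvd_of_eval_eq_zero hdvd
          rw [heq]; simp
        rw [hgdef] at hroot
        simp only [eval_sub, eval_pow, eval_X, eval_one, sub_eq_zero] at hroot
        exact hroot
      · rw [map_neg, sub_neg_eq_add]
        exact heq.symm
    · rintro ⟨r, hr, rfl⟩
      rw [mem_nthRootsFinset hm] at hr
      have hdvd : X - C r ∣ g := by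
        rw [dvd_iff_isRoot]
        rw [hgdef]
        simp [IsRoot, hr]
      have hprime : Prime (X - C r) := prime_X_sub_C r
      have hmem : (X - C r) ∈ normalizedFactors g :=
        mem_nf hg0 hprime ((monic_X_sub_C r).normalize_eq_self) hdvd
      exact ⟨by rwa [hPdef, Multiset.mem_toFinset], natDegree_X_sub_C r⟩
  have hLcard : (P.filter (fun h => h.natDegree = 1)).card
      = Nat.gcd m (Fintype.card K - 1) := by
    rw [hlineq, Finset.card_image_of_injective _ (fun a b hab => by
        have h2 : C a = C b := sub_right_injective hab
        exact C_injective h2), card_nthRootsFinset_eq_gcd hm]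
  have hLle : (P.filter (fun h => h.natDegree = 1)).card ≤ P.card :=
    Finset.card_filter_le _ _
  have homle : P.card ≤ m := by
    calc P.card = ∑ _h ∈ P, 1 := by simp
    _ ≤ ∑ h ∈ P, h.natDegree := Finset.sum_le_sum fun h hh => (hmemP h hh).2.2.2
    _ = m := hdeg.symm
  have hsplit := Finset.sum_filter_add_sum_filter_not P (fun h => h.natDegree = 1)
      (fun h => h.natDegree)
  have hS1 : ∑ h ∈ P.filter (fun h => h.natDegree = 1), h.natDegree
      = (P.filter (fun h => h.natDegree = 1)).card := by
    rw [Finset.sum_congr rfl (fun h hh => (Finset.mem_filter.mp hh).2)]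
    simp
  have hS2 : (P.filter (fun h => ¬ h.natDegree = 1)).card * 2
      ≤ ∑ h ∈ P.filter (fun h => ¬ h.natDegree = 1), h.natDegree := by
    have := Finset.card_nsmul_le_sum (P.filter (fun h => ¬ h.natDegree = 1))
      (fun h => h.natDegree) 2 (fun h hh => by
        obtain ⟨hhP, hne⟩ := Finset.mem_filter.mp hh
        have h1 := (hmemP h hhP).2.2.2
        show 2 ≤ h.natDegree
        omega)
    simpa [smul_eq_mul] using this
  have hcards := Finset.card_filter_add_card_filter_not
    (s := P) (p := fun h => h.natDegree = 1)
  refine ⟨?_, homle, ?_⟩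
  · rw [← hLcard]
    omega
  · rw [← hLcard]
    exact hLle

end Finite

/-- Lemma 6.2, Lenstra–Schoof: Let `q` be a prime power and `n ≥ 1`.
Then `W(xⁿ − 1) ≤ 2^{(n + gcd(n, q−1))/2}`; in particular `W(xⁿ − 1) ≤ 2ⁿ`, with
equality iff `n ∣ q − 1`, and if `n ∤ q − 1` then `W(xⁿ − 1) ≤ 2^{3n/4}`. -/
theorem stmt12 (q n : ℕ) (hq : IsPrimePow q) (hn : 0 < n)
    (F : Type) [Field F] [Fintype F] (hF : Fintype.card F = q) :
    (Wpoly ((Polynomial.X : Polynomial F) ^ n - 1) : ℝ)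
        ≤ 2 ^ (((n : ℝ) + (Nat.gcd n (q - 1) : ℝ)) / 2) ∧
      Wpoly ((Polynomial.X : Polynomial F) ^ n - 1) ≤ 2 ^ n ∧
      (Wpoly ((Polynomial.X : Polynomial F) ^ n - 1) = 2 ^ n ↔ n ∣ q - 1) ∧
      (¬ n ∣ q - 1 →
        (Wpoly ((Polynomial.X : Polynomial F) ^ n - 1) : ℝ) ≤ 2 ^ (3 * (n : ℝ) / 4)) := by
  classical
  set p := ringChar F with hpdef
  haveI hCharP : CharP F p := ringChar.charP F
  have hpprime : p.Prime := CharP.char_is_prime F p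
  haveI : Fact p.Prime := ⟨hpprime⟩
  haveI : CharP (Polynomial F) p :=
    charP_of_injective_algebraMap
      (by rw [Polynomial.algebraMap_eq]; exact Polynomial.C_injective) p
  obtain ⟨k, -, hk⟩ := FiniteField.card F p
  have hpq : p ∣ q := by
    rw [← hF, hk]
    exact dvd_pow_self p k.ne_zero
  have hq2 : 2 ≤ q := by rw [← hF]; exact Fintype.one_lt_card
  set a := n.factorization p with ha
  set m := ordCompl[p] n with hmdef
  have hmn : m ∣ n := Nat.ordCompl_dvd n p
  have hm0 : 0 < m := Nat.ordCompl_pos p hn.ne'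
  have hpm : ¬ p ∣ m := Nat.not_dvd_ordCompl hpprime hn.ne'
  have hmul : p ^ a * m = n := Nat.ordProj_mul_ordCompl_eq_self n p
  have hmF : (m : F) ≠ 0 := by
    rw [Ne, CharP.cast_eq_zero_iff F p m]
    exact hpm
  have hpow : ((Polynomial.X : Polynomial F) ^ n - 1)
      = ((Polynomial.X : Polynomial F) ^ m - 1) ^ (p ^ a) := by
    rw [sub_pow_char_pow (R := Polynomial F), one_pow, ← pow_mul, mul_comm m (p ^ a), hmul]
  have hm1 : ((Polynomial.X : Polynomial F) ^ m - 1) ≠ 0 := by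
    have : ((Polynomial.X : Polynomial F) ^ m - 1)
        = Polynomial.X ^ m - Polynomial.C 1 := by rw [map_one]
    rw [this]
    exact (monic_X_pow_sub_C 1 hm0.ne').ne_zero
  have hn1 : ((Polynomial.X : Polynomial F) ^ n - 1) ≠ 0 := by
    rw [hpow]
    exact pow_ne_zero _ hm1
  have hnf : (normalizedFactors ((Polynomial.X : Polynomial F) ^ n - 1)).toFinset
      = (normalizedFactors ((Polynomial.X : Polynomial F) ^ m - 1)).toFinset := by
    rw [hpow, normalizedFactors_pow]
    exact Multiset.toFinset_nsmul _ _ (pow_pos hpprime.pos a).ne'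
  set ω := (normalizedFactors ((Polynomial.X : Polynomial F) ^ m - 1)).toFinset.card with hω
  have hW : Wpoly ((Polynomial.X : Polynomial F) ^ n - 1) = 2 ^ ω := by
    rw [Wpoly_eq_two_pow hn1, hnf]
  obtain ⟨h2ω, hωm, hgcdω⟩ := omega_facts (K := F) hm0 hmF
  rw [hF] at h2ω hgcdω
  rw [← hω] at h2ω hωm hgcdω
  have hmlen : m ≤ n := Nat.le_of_dvd hn hmn
  have hgcddvd : Nat.gcd m (q - 1) ∣ Nat.gcd n (q - 1) :=
    Nat.dvd_gcd ((Nat.gcd_dvd_left _ _).trans hmn) (Nat.gcd_dvd_right _ _)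
  have hq1pos : 0 < q - 1 := by omega
  have hgcdle : Nat.gcd m (q - 1) ≤ Nat.gcd n (q - 1) :=
    Nat.le_of_dvd (Nat.gcd_pos_of_pos_right _ hq1pos) hgcddvd
  have hgcdn : Nat.gcd n (q - 1) ≤ n := Nat.le_of_dvd hn (Nat.gcd_dvd_left _ _)
  have key1 : 2 * ω ≤ n + Nat.gcd n (q - 1) := by omega
  have hωn : ω ≤ n := le_trans hωm hmlen
  -- the m = n characterization when n ∣ q - 1 or ¬ p ∣ n
  have hmn_of_not_dvd : ¬ p ∣ n → m = n := by
    intro hpn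
    have ha0 : n.factorization p = 0 := Nat.factorization_eq_zero_of_not_dvd hpn
    rw [hmdef, ha0, pow_zero, Nat.div_one]
  refine ⟨?_, ?_, ?_, ?_⟩
  · -- first inequality
    have hcast : ((Wpoly ((Polynomial.X : Polynomial F) ^ n - 1) : ℕ) : ℝ)
        = (2 : ℝ) ^ (ω : ℝ) := by
      rw [hW, Real.rpow_natCast]
      push_cast
      ring
    rw [hcast]
    apply Real.rpow_le_rpow_of_exponent_le one_le_two
    rw [le_div_iff₀ (by norm_num : (0:ℝ) < 2)]
    have : ((2 * ω : ℕ) : ℝ) ≤ ((n + Nat.gcd n (q - 1) : ℕ) : ℝ) := Nat.cast_le.mpr key1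
    push_cast at this
    linarith
  · rw [hW]
    exact Nat.pow_le_pow_right (by norm_num) hωn
  · rw [hW]
    constructor
    · intro hWn
      have hωeqn : ω = n := Nat.pow_right_injective le_rfl hWn
      have hmeqn : m = n := le_antisymm hmlen (hωeqn ▸ hωm)
      have hgcdeq : Nat.gcd n (q - 1) = n := by omega
      rw [← hgcdeq]
      exact Nat.gcd_dvd_right _ _
    · intro hdvd
      have hpn : ¬ p ∣ n := by
        intro hpn
        have h1 : p ∣ q - 1 := hpn.trans hdvd
        have h2 : p ∣ q - (q - 1) := Nat.dvd_sub hpq h1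
        rw [(by omega : q - (q - 1) = 1)] at h2
        exact hpprime.one_lt.ne' (Nat.eq_one_of_dvd_one h2)
      have hmeqn : m = n := hmn_of_not_dvd hpn
      have hgcdeq : Nat.gcd n (q - 1) = n := Nat.gcd_eq_left hdvd
      have hωeq : ω = n := by
        rw [hmeqn, hgcdeq] at hgcdω
        omega
      rw [hωeq]
  · intro hndvd
    have key2 : 4 * ω ≤ 3 * n := by
      by_cases hpn : p ∣ n
      · have hmne : m ≠ n := by
          intro hme
          rw [← hme] at hpn
          exact hpm hpn
        obtain ⟨c, hc⟩ := hmn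
        have hc2 : 2 ≤ c := by
          rcases Nat.lt_or_ge c 2 with h | h
          · interval_cases c <;> omega
          · exact h
        have h2m : 2 * m ≤ n := by
          calc 2 * m = m * 2 := by ring
          _ ≤ m * c := Nat.mul_le_mul_left m hc2
          _ = n := hc.symm
        omega
      · have hmeqn : m = n := hmn_of_not_dvd hpn
        have hdne : Nat.gcd n (q - 1) ≠ n := by
          intro hgeq
          exact hndvd (hgeq ▸ Nat.gcd_dvd_right n (q - 1))
        obtain ⟨c, hc⟩ := Nat.gcd_dvd_left n (q - 1)
        have hgpos : 0 < Nat.gcd n (q - 1) := Nat.gcd_pos_of_pos_right _ hq1pos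
        have hc2 : 2 ≤ c := by
          rcases Nat.lt_or_ge c 2 with h | h
          · interval_cases c <;> omega
          · exact h
        have h2d : 2 * Nat.gcd n (q - 1) ≤ n := by
          calc 2 * Nat.gcd n (q - 1) = Nat.gcd n (q - 1) * 2 := by ring
          _ ≤ Nat.gcd n (q - 1) * c := Nat.mul_le_mul_left _ hc2
          _ = n := hc.symm
        rw [hmeqn] at h2ω
        omega
    have hcast : ((Wpoly ((Polynomial.X : Polynomial F) ^ n - 1) : ℕ) : ℝ)
        = (2 : ℝ) ^ (ω : ℝ) := by
      rw [hW, Real.rpow_natCast]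
      push_cast
      ring
    rw [hcast]
    apply Real.rpow_le_rpow_of_exponent_le one_le_two
    rw [le_div_iff₀ (by norm_num : (0:ℝ) < 4)]
    have hc4 : ((4 * ω : ℕ) : ℝ) ≤ ((3 * n : ℕ) : ℝ) := Nat.cast_le.mpr key2
    push_cast at hc4
    linarith
end

section
/- Let q be a prime power and n a positive integer, and let W(x^n − 1) denote the number of squarefree monic divisors of x^n − 1 in F_q[x]. Then W(x^n − 1) ≤ 2^{(n+a)/b}, where: (a, b) = (0, 1) if q ≥ 29; (a, b) = (q − 1, 2) if 7 ≤ q ≤ 27; (a, b) = (14, 5) if q = 2; (a, b) = (20, 4) if q = 3; (a, b) = (12, 3) if q = 4; and (a, b) = (18, 3) if q = 5. -/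
open Polynomial UniqueFactorizationMonoid

section Aux

variable {F : Type*} [Field F] [DecidableEq F]

private lemma mem_nf_monic {f p : F[X]} (hp : p ∈ normalizedFactors f) :
    p.Monic ∧ Irreducible p := by
  have hirr := irreducible_of_normalized_factor p hp
  have hnorm := normalize_normalized_factor p hp
  refine ⟨?_, hirr⟩
  have := Polynomial.monic_normalize (p := p) hirr.ne_zero
  rwa [hnorm] at this

private lemma prod_toFinset_nf {g : F[X]} (hm : g.Monic) (hsq : Squarefree g) :
    ((normalizedFactors g).toFinset.prod id) = g := by
  have hnd : (normalizedFactors g).Nodup :=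
    (squarefree_iff_nodup_normalizedFactors hm.ne_zero).mp hsq
  have hval : ((normalizedFactors g).toFinset).val = normalizedFactors g := by
    rw [Multiset.toFinset_val, Multiset.dedup_eq_self.mpr hnd]
  rw [Finset.prod, hval, Multiset.map_id]
  have hassoc := prod_normalizedFactors (a := g) hm.ne_zero
  have hmp : ((normalizedFactors g).map id).prod.Monic :=
    Polynomial.monic_multiset_prod_of_monic _ id (fun p hp => (mem_nf_monic hp).1)
  rw [Multiset.map_id] at hmp
  calc (normalizedFactors g).prod
      = normalize (normalizedFactors g).prod := hmp.normalize_eq_self.symm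
    _ = normalize g := normalize_eq_normalize hassoc.dvd hassoc.symm.dvd
    _ = g := hm.normalize_eq_self

private lemma nf_prod_finset_s13 {T : Finset F[X]} (h : ∀ p ∈ T, p.Monic ∧ Irreducible p) :
    normalizedFactors (T.prod id) = T.val := by
  rw [Finset.prod, Multiset.map_id,
    normalizedFactors_prod_eq _ (fun a ha => (h a ha).2)]
  exact (Multiset.map_congr rfl (fun a ha => (h a ha).1.normalize_eq_self)).trans
    (Multiset.map_id _)

private lemma monic_finset_prod {T : Finset F[X]} (h : ∀ p ∈ T, p.Monic ∧ Irreducible p) :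
    (T.prod id).Monic :=
  Polynomial.monic_prod_of_monic _ _ (fun p hp => (h p hp).1)

/-- product of a finset of monic irreducibles each dividing `f` divides `f`. -/
private lemma finset_prod_dvd {T : Finset F[X]} {f : F[X]} (hf : f ≠ 0)
    (h : ∀ p ∈ T, p.Monic ∧ Irreducible p) (hd : ∀ p ∈ T, p ∣ f) :
    T.prod id ∣ f := by
  rw [dvd_iff_normalizedFactors_le_normalizedFactors (monic_finset_prod h).ne_zero hf,
    nf_prod_finset_s13 h]
  have hsub : T ⊆ (normalizedFactors f).toFinset := by
    intro p hp
    rw [Multiset.mem_toFinset]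
    obtain ⟨q, hq, hpq⟩ := exists_mem_normalizedFactors_of_dvd hf (h p hp).2 (hd p hp)
    have : p = q := by
      have := normalize_eq_normalize hpq.dvd hpq.symm.dvd
      rwa [(h p hp).1.normalize_eq_self, normalize_normalized_factor q hq] at this
    rwa [this]
  calc T.val ≤ ((normalizedFactors f).toFinset).val := Finset.val_le_iff.mpr hsub
    _ = (normalizedFactors f).dedup := Multiset.toFinset_val _
    _ ≤ normalizedFactors f := Multiset.dedup_le _

private lemma fneq (n : ℕ) (hn : 0 < n) : ((X : F[X]) ^ n - 1) ≠ 0 := by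
  intro h
  have : ((X : F[X]) ^ n - 1).natDegree = n := by
    rw [← C_1]; exact natDegree_X_pow_sub_C
  rw [h, natDegree_zero] at this
  exact hn.ne this

private lemma sum_deg_le {T : Finset F[X]} {f : F[X]} (hf : f ≠ 0)
    (h : ∀ p ∈ T, p.Monic ∧ Irreducible p) (hd : ∀ p ∈ T, p ∣ f) :
    ∑ p ∈ T, p.natDegree ≤ f.natDegree := by
  have hdvd := finset_prod_dvd hf h hd
  have := Polynomial.natDegree_le_of_dvd hdvd hf
  have e : T.prod id = ∏ p ∈ T, p := Finset.prod_congr rfl (fun _ _ => rfl)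
  rw [e, Polynomial.natDegree_prod _ _ (fun p hp => (h p hp).2.ne_zero)] at this
  exact this

private lemma sum_deg_S_le (n : ℕ) (hn : 0 < n) :
    ∑ p ∈ (normalizedFactors ((X : F[X]) ^ n - 1)).toFinset, p.natDegree ≤ n := by
  have h := sum_deg_le (fneq n hn)
    (fun p hp => mem_nf_monic (f := (X : F[X]) ^ n - 1) (Multiset.mem_toFinset.mp hp))
    (fun p hp => dvd_of_mem_normalizedFactors (Multiset.mem_toFinset.mp hp))
  rwa [show ((X : F[X]) ^ n - 1).natDegree = n by rw [← C_1]; exact natDegree_X_pow_sub_C] at h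

variable [Fintype F]

private lemma card_S1_le (n : ℕ) (hn : 0 < n) :
    ((normalizedFactors ((X : F[X]) ^ n - 1)).toFinset.filter
      (fun p => p.natDegree = 1)).card ≤ Fintype.card F - 1 := by
  classical
  set q := Fintype.card F
  set T := ((normalizedFactors ((X : F[X]) ^ n - 1)).toFinset.filter
      (fun p => p.natDegree = 1)) with hT
  have hmon : ∀ p ∈ T, p.Monic ∧ Irreducible p := fun p hp =>
    mem_nf_monic (Multiset.mem_toFinset.mp (Finset.mem_filter.mp hp).1)
  have hq1 : 0 < q - 1 := by
    have : 1 < q := Fintype.one_lt_card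
    omega
  have hG : ((X : F[X]) ^ (q - 1) - 1) ≠ 0 := fneq _ hq1
  have hdvd : ∀ p ∈ T, p ∣ (X : F[X]) ^ (q - 1) - 1 := by
    intro p hp
    obtain ⟨hpS, hdeg⟩ := Finset.mem_filter.mp hp
    rw [Multiset.mem_toFinset] at hpS
    have hpm := (hmon p hp).1
    have hpeq : p = X - C (-(p.coeff 0)) := by
      rw [map_neg, sub_neg_eq_add]; exact hpm.eq_X_add_C hdeg
    set c := -(p.coeff 0)
    have hroot : ((X : F[X]) ^ n - 1).IsRoot c := by
      rw [← dvd_iff_isRoot, ← hpeq]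
      exact dvd_of_mem_normalizedFactors hpS
    have hc : c ^ n = 1 := by
      have := hroot
      simp only [IsRoot.def, eval_sub, eval_pow, eval_X, eval_one, sub_eq_zero] at this
      exact this
    have hc0 : c ≠ 0 := fun h => by simp [h, zero_pow hn.ne'] at hc
    have hpow : c ^ (q - 1) = 1 := FiniteField.pow_card_sub_one_eq_one c hc0
    rw [hpeq, dvd_iff_isRoot]
    simp [IsRoot.def, hpow]
  have h := sum_deg_le hG hmon hdvd
  have hdeg1 : ∀ p ∈ T, p.natDegree = 1 := fun p hp => (Finset.mem_filter.mp hp).2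
  rw [Finset.sum_congr rfl hdeg1, Finset.sum_const, smul_eq_mul, mul_one] at h
  rwa [show ((X : F[X]) ^ (q - 1) - 1).natDegree = q - 1 by
    rw [← C_1]; exact natDegree_X_pow_sub_C] at h

private lemma irred_dvd_X_pow_card_pow_sub_X {p : F[X]} (hm : p.Monic) (hi : Irreducible p) :
    p ∣ X ^ (Fintype.card F) ^ p.natDegree - X := by
  haveI : Fact (Irreducible p) := ⟨hi⟩
  set K := AdjoinRoot p
  let pb : PowerBasis F K := AdjoinRoot.powerBasis hi.ne_zero
  haveI : Module.Finite F K := PowerBasis.finite pb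
  haveI : Fintype K := Module.fintypeOfFintype pb.basis
  have hcard : Fintype.card K = (Fintype.card F) ^ p.natDegree := by
    rw [Module.card_fintype pb.basis, Fintype.card_fin, AdjoinRoot.powerBasis_dim]
  have hroot : (Polynomial.aeval (AdjoinRoot.root p))
      ((X : F[X]) ^ (Fintype.card F) ^ p.natDegree - X) = 0 := by
    rw [map_sub, map_pow, aeval_X, ← hcard, FiniteField.pow_card, sub_self]
  have := minpoly.dvd F (AdjoinRoot.root p) hroot
  rwa [AdjoinRoot.minpoly_root hi.ne_zero, hm.leadingCoeff, inv_one, map_one, mul_one] at this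

private lemma card_Sd_le (d : ℕ) (hd : 2 ≤ d) (f : F[X]) (hf : f ≠ 0) :
    d * ((normalizedFactors f).toFinset.filter
      (fun p => p.natDegree = d)).card + Fintype.card F ≤ Fintype.card F ^ d := by
  classical
  set q := Fintype.card F with hq
  have hq1 : 1 < q := Fintype.one_lt_card
  set T := ((normalizedFactors f).toFinset.filter (fun p => p.natDegree = d)) with hT
  set L : Finset F[X] := Finset.univ.image (fun c : F => X - C c) with hL
  have hLmem : ∀ p ∈ L, ∃ c : F, p = X - C c := by
    intro p hp
    obtain ⟨c, _, rfl⟩ := Finset.mem_image.mp hp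
    exact ⟨c, rfl⟩
  have hdisj : Disjoint T L := by
    rw [Finset.disjoint_left]
    intro p hpT hpL
    obtain ⟨c, rfl⟩ := hLmem p hpL
    have : (X - C c).natDegree = d := (Finset.mem_filter.mp hpT).2
    rw [natDegree_X_sub_C] at this
    omega
  have hG : ((X : F[X]) ^ q ^ d - X) ≠ 0 :=
    FiniteField.X_pow_card_pow_sub_X_ne_zero (p := q) (n := d) F (by omega) hq1
  have hmon : ∀ p ∈ T ∪ L, p.Monic ∧ Irreducible p := by
    intro p hp
    rcases Finset.mem_union.mp hp with h | h
    · exact mem_nf_monic (Multiset.mem_toFinset.mp (Finset.mem_filter.mp h).1)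
    · obtain ⟨c, rfl⟩ := hLmem p h
      exact ⟨monic_X_sub_C c, irreducible_X_sub_C c⟩
  have hdvd : ∀ p ∈ T ∪ L, p ∣ (X : F[X]) ^ q ^ d - X := by
    intro p hp
    rcases Finset.mem_union.mp hp with h | h
    · have hdeg : p.natDegree = d := (Finset.mem_filter.mp h).2
      have := irred_dvd_X_pow_card_pow_sub_X (hmon p hp).1 (hmon p hp).2
      rwa [hdeg] at this
    · obtain ⟨c, rfl⟩ := hLmem p h
      rw [dvd_iff_isRoot, IsRoot.def, hq]
      simp [FiniteField.pow_card_pow]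
  have h := sum_deg_le hG hmon hdvd
  have hdeg2 : ((X : F[X]) ^ q ^ d - X).natDegree = q ^ d :=
    FiniteField.X_pow_card_pow_sub_X_natDegree_eq (p := q) (n := d) F (by omega) hq1
  rw [hdeg2] at h
  rw [Finset.sum_union hdisj] at h
  have hTsum : ∑ p ∈ T, p.natDegree = d * T.card := by
    rw [Finset.sum_congr rfl (fun p hp => (Finset.mem_filter.mp hp).2),
      Finset.sum_const, smul_eq_mul, mul_comm]
  have hLsum : ∑ p ∈ L, p.natDegree = q := by
    have hcard : L.card = q := by
      rw [hL, Finset.card_image_of_injective _ (fun a b hab => by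
        have := congrArg (fun p : F[X] => -(p.coeff 0)) hab
        simpa using this), Finset.card_univ]
    calc ∑ p ∈ L, p.natDegree = ∑ _p ∈ L, 1 := Finset.sum_congr rfl (fun p hp => by
          obtain ⟨c, rfl⟩ := hLmem p hp; exact natDegree_X_sub_C c)
      _ = q := by rw [Finset.sum_const, smul_eq_mul, mul_one, hcard]
  rw [hTsum, hLsum] at h
  exact h

private lemma master (S : Finset F[X]) (hdegpos : ∀ p ∈ S, 1 ≤ p.natDegree) (b : ℕ) :
    b * S.card ≤ (∑ p ∈ S, p.natDegree)
      + ∑ d ∈ Finset.Ico 1 b, (b - d) * (S.filter (fun p => p.natDegree = d)).card := by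
  classical
  have step1 : b * S.card ≤ (∑ p ∈ S, p.natDegree) + ∑ p ∈ S, (b - p.natDegree) := by
    calc b * S.card = ∑ _p ∈ S, b := by rw [Finset.sum_const, smul_eq_mul, mul_comm]
      _ ≤ ∑ p ∈ S, (p.natDegree + (b - p.natDegree)) :=
          Finset.sum_le_sum (fun p _ => by omega)
      _ = _ := Finset.sum_add_distrib
  refine le_trans step1 (Nat.add_le_add_left ?_ _)
  have step2 : ∑ p ∈ S, (b - p.natDegree)
      = ∑ p ∈ S.filter (fun p => p.natDegree < b), (b - p.natDegree) := by
    rw [eq_comm]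
    apply Finset.sum_subset (Finset.filter_subset _ _)
    intro p hp hnp
    rw [Finset.mem_filter, not_and] at hnp
    have := hnp hp
    omega
  rw [step2]
  rw [← Finset.sum_fiberwise_of_maps_to (g := fun p : F[X] => p.natDegree)
    (t := Finset.Ico 1 b) (fun p hp => by
      rw [Finset.mem_filter] at hp
      rw [Finset.mem_Ico]
      exact ⟨hdegpos p hp.1, hp.2⟩)]
  apply Finset.sum_le_sum
  intro d hd
  rw [Finset.mem_Ico] at hd
  have hfib : (S.filter (fun p => p.natDegree < b)).filter (fun p => p.natDegree = d)
      = S.filter (fun p => p.natDegree = d) := by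
    ext p
    simp only [Finset.mem_filter, and_assoc]
    constructor
    · rintro ⟨h1, _, h3⟩; exact ⟨h1, h3⟩
    · rintro ⟨h1, h3⟩; exact ⟨h1, by omega, h3⟩
  rw [hfib]
  rw [Finset.sum_congr rfl (fun p hp => by
    rw [(Finset.mem_filter.mp hp).2]), Finset.sum_const, smul_eq_mul, mul_comm]

end Aux

section Aux2

variable {F : Type*} [Field F] [DecidableEq F]

private lemma Wpoly_eq (f : F[X]) (hf : f ≠ 0) :
    Wpoly f = 2 ^ (normalizedFactors f).toFinset.card := by
  set S := (normalizedFactors f).toFinset with hS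
  have key : {g : F[X] | g.Monic ∧ Squarefree g ∧ g ∣ f}
      = ↑(S.powerset.image (fun T => T.prod id)) := by
    ext g
    simp only [Set.mem_setOf_eq, Finset.coe_image, Set.mem_image, Finset.mem_coe,
      Finset.mem_powerset]
    constructor
    · rintro ⟨hm, hsq, hdvd⟩
      refine ⟨(normalizedFactors g).toFinset, ?_, prod_toFinset_nf hm hsq⟩
      exact Multiset.toFinset_subset.mpr (Multiset.subset_of_le
        ((dvd_iff_normalizedFactors_le_normalizedFactors hm.ne_zero hf).mp hdvd))
    · rintro ⟨T, hT, rfl⟩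
      have hmon : ∀ p ∈ T, p.Monic ∧ Irreducible p :=
        fun p hp => mem_nf_monic (Multiset.mem_toFinset.mp (hT hp))
      refine ⟨monic_finset_prod hmon, ?_, ?_⟩
      · rw [squarefree_iff_nodup_normalizedFactors (monic_finset_prod hmon).ne_zero,
          nf_prod_finset_s13 hmon]
        exact T.nodup
      · exact finset_prod_dvd hf hmon
          (fun p hp => dvd_of_mem_normalizedFactors (Multiset.mem_toFinset.mp (hT hp)))
  rw [Wpoly, key, Set.ncard_coe_finset, Finset.card_image_of_injOn, Finset.card_powerset]
  intro T1 h1 T2 h2 heq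
  rw [Finset.mem_coe, Finset.mem_powerset] at h1 h2
  have e1 := nf_prod_finset_s13 (fun p hp => mem_nf_monic (Multiset.mem_toFinset.mp (h1 hp)))
  have e2 := nf_prod_finset_s13 (fun p hp => mem_nf_monic (Multiset.mem_toFinset.mp (h2 hp)))
  have : T1.val = T2.val := by
    rw [← e1, ← e2]; simpa using congrArg normalizedFactors heq
  exact Finset.val_inj.mp this

private lemma S_degpos (f : F[X]) :
    ∀ p ∈ (normalizedFactors f).toFinset, 1 ≤ p.natDegree := by
  intro p hp
  obtain ⟨hm, hi⟩ := mem_nf_monic (Multiset.mem_toFinset.mp hp)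
  by_contra h
  push_neg at h
  interval_cases hdeg : p.natDegree
  exact hi.not_isUnit (by rw [hm.natDegree_eq_zero.mp hdeg]; exact isUnit_one)

private lemma glue {f : F[X]} (hf : f ≠ 0) (a b n : ℕ) (hb : 0 < b)
    (h : b * (normalizedFactors f).toFinset.card ≤ n + a) :
    (Wpoly f : ℝ) ≤ 2 ^ (((n : ℝ) + (a : ℝ)) / (b : ℝ)) := by
  rw [Wpoly_eq f hf]
  set ω := (normalizedFactors f).toFinset.card
  have h1 : ((2 ^ ω : ℕ) : ℝ) = (2 : ℝ) ^ (ω : ℝ) := by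
    rw [Real.rpow_natCast]; push_cast; ring
  rw [h1]
  apply Real.rpow_le_rpow_of_exponent_le one_le_two
  rw [le_div_iff₀ (by positivity)]
  calc (ω : ℝ) * b = ((b * ω : ℕ) : ℝ) := by push_cast; ring
    _ ≤ ((n + a : ℕ) : ℝ) := Nat.cast_le.mpr h
    _ = (n : ℝ) + (a : ℝ) := by push_cast; ring

end Aux2

/-- Lemma 6.3, Aguirre–Neumann: Let `q` be a prime power and `n ≥ 1`.
Then `W(xⁿ − 1) ≤ 2^{(n+a)/b}` where `(a, b) = (0, 1)` for `q ≥ 29`,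
`(a, b) = (q − 1, 2)` for `7 ≤ q ≤ 27`, `(a, b) = (14, 5)` for `q = 2`,
`(a, b) = (20, 4)` for `q = 3`, `(a, b) = (12, 3)` for `q = 4`, and
`(a, b) = (18, 3)` for `q = 5`. -/
theorem stmt13 (q n : ℕ) (hq : IsPrimePow q) (hn : 0 < n)
    (F : Type) [Field F] [Fintype F] (hF : Fintype.card F = q) :
    (29 ≤ q →
      (Wpoly ((Polynomial.X : Polynomial F) ^ n - 1) : ℝ) ≤ 2 ^ (((n : ℝ) + 0) / 1)) ∧
    (7 ≤ q → q ≤ 27 →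
      (Wpoly ((Polynomial.X : Polynomial F) ^ n - 1) : ℝ)
        ≤ 2 ^ (((n : ℝ) + ((q : ℝ) - 1)) / 2)) ∧
    (q = 2 →
      (Wpoly ((Polynomial.X : Polynomial F) ^ n - 1) : ℝ) ≤ 2 ^ (((n : ℝ) + 14) / 5)) ∧
    (q = 3 →
      (Wpoly ((Polynomial.X : Polynomial F) ^ n - 1) : ℝ) ≤ 2 ^ (((n : ℝ) + 20) / 4)) ∧
    (q = 4 →
      (Wpoly ((Polynomial.X : Polynomial F) ^ n - 1) : ℝ) ≤ 2 ^ (((n : ℝ) + 12) / 3)) ∧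
    (q = 5 →
      (Wpoly ((Polynomial.X : Polynomial F) ^ n - 1) : ℝ) ≤ 2 ^ (((n : ℝ) + 18) / 3)) := by
  classical
  set f : F[X] := (X : F[X]) ^ n - 1 with hfdef
  have hf : f ≠ 0 := fneq n hn
  set S := (normalizedFactors f).toFinset with hSdef
  have hA : ∑ p ∈ S, p.natDegree ≤ n := sum_deg_S_le n hn
  have hpos := S_degpos f
  have hB : (S.filter (fun p => p.natDegree = 1)).card ≤ q - 1 := by
    have := card_S1_le (F := F) n hn
    rwa [hF] at this
  have hC : ∀ d : ℕ, 2 ≤ d →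
      d * (S.filter (fun p => p.natDegree = d)).card + q ≤ q ^ d := by
    intro d hd
    have := card_Sd_le d hd f hf
    rwa [hF] at this
  have hM := master S hpos
  refine ⟨?_, ?_, ?_, ?_, ?_, ?_⟩
  · -- q ≥ 29 : b = 1, a = 0
    intro _
    have h1 := hM 1
    simp only [Finset.Ico_self, Finset.sum_empty, add_zero, one_mul] at h1
    have hineq : 1 * S.card ≤ n + 0 := by omega
    have := glue hf 0 1 n one_pos (hSdef ▸ hineq)
    simpa using this
  · -- 7 ≤ q ≤ 27 : b = 2, a = q - 1
    intro hq7 _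
    have h1 := hM 2
    rw [show Finset.Ico 1 2 = {1} from rfl] at h1
    simp only [Finset.sum_singleton] at h1
    have hineq : 2 * S.card ≤ n + (q - 1) := by omega
    have := glue hf (q - 1) 2 n two_pos (hSdef ▸ hineq)
    rwa [Nat.cast_sub (by omega), Nat.cast_one, Nat.cast_ofNat] at this
  · -- q = 2 : b = 5, a = 14
    rintro rfl
    have h1 := hM 5
    rw [show Finset.Ico 1 5 = {1, 2, 3, 4} from rfl] at h1
    rw [Finset.sum_insert (by decide), Finset.sum_insert (by decide),
      Finset.sum_insert (by decide), Finset.sum_singleton] at h1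
    have h2 := hC 2 (by norm_num)
    have h3 := hC 3 (by norm_num)
    have h4 := hC 4 (by norm_num)
    have hineq : 5 * S.card ≤ n + 14 := by norm_num at h1 h2 h3 h4 ⊢; omega
    have := glue hf 14 5 n (by norm_num) (hSdef ▸ hineq)
    norm_num at this ⊢
    exact this
  · -- q = 3 : b = 4, a = 20
    rintro rfl
    have h1 := hM 4
    rw [show Finset.Ico 1 4 = {1, 2, 3} from rfl] at h1
    rw [Finset.sum_insert (by decide), Finset.sum_insert (by decide),
      Finset.sum_singleton] at h1
    have h2 := hC 2 (by norm_num)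
    have h3 := hC 3 (by norm_num)
    have hineq : 4 * S.card ≤ n + 20 := by norm_num at h1 h2 h3 ⊢; omega
    have := glue hf 20 4 n (by norm_num) (hSdef ▸ hineq)
    norm_num at this ⊢
    exact this
  · -- q = 4 : b = 3, a = 12
    rintro rfl
    have h1 := hM 3
    rw [show Finset.Ico 1 3 = {1, 2} from rfl] at h1
    rw [Finset.sum_insert (by decide), Finset.sum_singleton] at h1
    have h2 := hC 2 (by norm_num)
    have hineq : 3 * S.card ≤ n + 12 := by norm_num at h1 h2 ⊢; omega
    have := glue hf 12 3 n (by norm_num) (hSdef ▸ hineq)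
    norm_num at this ⊢
    exact this
  · -- q = 5 : b = 3, a = 18
    rintro rfl
    have h1 := hM 3
    rw [show Finset.Ico 1 3 = {1, 2} from rfl] at h1
    rw [Finset.sum_insert (by decide), Finset.sum_singleton] at h1
    have h2 := hC 2 (by norm_num)
    have hineq : 3 * S.card ≤ n + 18 := by norm_num at h1 h2 ⊢; omega
    have := glue hf 18 3 n (by norm_num) (hSdef ▸ hineq)
    norm_num at this ⊢
    exact this
end
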